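/- arXiv:1503.05699 — 6 statements merged into one kernel-verified Lean document; each statement's English description precedes it below -/
import Mathlib

section
/- (Montel–Tonelli bound) Let a, b > 0, let p : (0,a] → (0,∞) be locally integrable on (0,a] with ∫_0^a p(s) ds < +∞, and let ψ : [0, 2b] → [0,∞) be continuous with ψ(0) = 0, ψ(x) > 0 for all x ∈ (0, b], and ∫_{0+} ds/ψ(s) = +∞. Then g : (0,a] × [0,b] → [0,∞) defined by g(t,x) = p(t) ψ(x) is a uniqueness bound. -/
open MeasureTheory Set Filter Topology
open scoped NNReal ENNReal

/-- FTC for Lipschitz functions: `f β - f α = ∫ deriv f`. -/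
lemma lipschitz_ftc {f : ℝ → ℝ} {K : ℝ≥0} (hf : LipschitzWith K f) {α β : ℝ} (hab : α ≤ β) :
    f β - f α = ∫ s in Set.Ioc α β, deriv f s := by
  have hcont : Continuous f := hf.continuous
  set h : ℕ → ℝ := fun n => 1 / (n + 1) with hh
  have hpos : ∀ n, 0 < h n := fun n => by positivity
  have hh0 : Tendsto h atTop (𝓝 0) := tendsto_one_div_add_atTop_nhds_zero_nat
  set F : ℕ → ℝ → ℝ := fun n s => (f (s + h n) - f s) / h n with hF
  -- pointwise a.e. convergence to deriv f
  have hdiff : ∀ᵐ s : ℝ, DifferentiableAt ℝ f s := hf.ae_differentiableAt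
  have hlim : ∀ᵐ s : ℝ, Tendsto (fun n => F n s) atTop (𝓝 (deriv f s)) := by
    filter_upwards [hdiff] with s hs
    have hd : HasDerivAt f (deriv f s) s := hs.hasDerivAt
    rw [hasDerivAt_iff_tendsto_slope] at hd
    have hseq : Tendsto (fun n => s + h n) atTop (𝓝[≠] s) := by
      refine tendsto_nhdsWithin_iff.2 ⟨?_, ?_⟩
      · simpa using (tendsto_const_nhds.add hh0)
      · exact Eventually.of_forall fun n => by
          simp only [mem_compl_iff, mem_singleton_iff]
          have := hpos n; intro hc; nlinarith [hc]
    have := hd.comp hseq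
    convert this using 2 with n
    simp only [Function.comp_apply, slope_def_field, add_sub_cancel_left, hF]
  -- uniform bound
  have hbound : ∀ n, ∀ s, ‖F n s‖ ≤ (K : ℝ) := by
    intro n s
    have h1 : |f (s + h n) - f s| ≤ K * |(s + h n) - s| := by
      have := hf.dist_le_mul (s + h n) s
      simpa [Real.dist_eq] using this
    have h2 : |(s + h n) - s| = h n := by
      rw [add_sub_cancel_left, abs_of_pos (hpos n)]
    rw [h2] at h1
    have : ‖F n s‖ = |f (s + h n) - f s| / h n := by
      rw [hF]; simp [abs_div, abs_of_pos (hpos n)]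
    rw [this, div_le_iff₀ (hpos n)]
    linarith
  -- integral of F n over [α,β]
  have hint : ∀ n, ∫ s in α..β, F n s =
      ((∫ s in β..(β + h n), f s) - ∫ s in α..(α + h n), f s) / h n := by
    intro n
    have hI : ∀ u v : ℝ, IntervalIntegrable f volume u v := fun u v =>
      hcont.intervalIntegrable u v
    have e1 : ∫ s in α..β, f (s + h n) = ∫ s in (α + h n)..(β + h n), f s :=
      intervalIntegral.integral_comp_add_right f (h n)
    have e2 : ∫ s in α..β, F n s = ((∫ s in α..β, f (s + h n)) - ∫ s in α..β, f s) / h n := by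
      have hc2 : Continuous fun s : ℝ => f (s + h n) := by fun_prop
      rw [hF]
      simp only [div_eq_mul_inv]
      rw [intervalIntegral.integral_mul_const, intervalIntegral.integral_sub
        (hc2.intervalIntegrable α β) (hI α β)]
    rw [e2, e1]
    congr 1
    have c1 : (∫ s in (α + h n)..α, f s) + (∫ s in α..β, f s) = ∫ s in (α + h n)..β, f s :=
      intervalIntegral.integral_add_adjacent_intervals (hI _ _) (hI _ _)
    have c2 : (∫ s in (α + h n)..β, f s) + (∫ s in β..(β + h n), f s)
        = ∫ s in (α + h n)..(β + h n), f s :=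
      intervalIntegral.integral_add_adjacent_intervals (hI _ _) (hI _ _)
    have c3 : (∫ s in (α + h n)..α, f s) = - ∫ s in α..(α + h n), f s :=
      intervalIntegral.integral_symm _ _
    linarith
  -- the averaged endpoints converge
  have hend : ∀ γ : ℝ, Tendsto (fun n => (∫ s in γ..(γ + h n), f s) / h n) atTop (𝓝 (f γ)) := by
    intro γ
    have key : ∀ n, ‖(∫ s in γ..(γ + h n), f s) / h n - f γ‖ ≤ (K : ℝ) * h n := by
      intro n
      have e : (∫ s in γ..(γ + h n), f s) / h n - f γ
          = (∫ s in γ..(γ + h n), (f s - f γ)) / h n := by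
        rw [intervalIntegral.integral_sub (hcont.intervalIntegrable _ _)
          (intervalIntegrable_const)]
        rw [intervalIntegral.integral_const]
        rw [smul_eq_mul, add_sub_cancel_left, sub_div, mul_div_cancel_left₀ (f γ) (hpos n).ne']
      rw [e]
      have hb : ∀ s ∈ Set.uIoc γ (γ + h n), ‖f s - f γ‖ ≤ (K : ℝ) * h n := by
        intro s hs
        rw [Set.uIoc_of_le (by linarith [hpos n])] at hs
        have : |f s - f γ| ≤ K * |s - γ| := by
          have := hf.dist_le_mul s γ; simpa [Real.dist_eq] using this
        refine this.trans ?_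
        have : |s - γ| ≤ h n := by
          rw [abs_of_nonneg (by linarith [hs.1.le])]
          linarith [hs.2]
        calc (K:ℝ) * |s - γ| ≤ (K:ℝ) * h n :=
              mul_le_mul_of_nonneg_left this (NNReal.coe_nonneg K)
          _ = (K:ℝ) * h n := rfl
      have := intervalIntegral.norm_integral_le_of_norm_le_const hb
      rw [norm_div]
      rw [Real.norm_eq_abs (h n), abs_of_pos (hpos n)]
      rw [div_le_iff₀ (hpos n)]
      calc ‖∫ s in γ..(γ + h n), (f s - f γ)‖ ≤ (K : ℝ) * h n * |(γ + h n) - γ| := this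
        _ = (K : ℝ) * h n * h n := by rw [add_sub_cancel_left, abs_of_pos (hpos n)]
    have h0 : Tendsto (fun n => (K : ℝ) * h n) atTop (𝓝 0) := by
      have := hh0.const_mul (K : ℝ)
      rwa [mul_zero] at this
    have := squeeze_zero_norm key h0
    have := this.add (tendsto_const_nhds (α := ℕ) (x := f γ))
    simpa using this
  -- hence interval integrals of F n tend to f β - f α
  have hIlim : Tendsto (fun n => ∫ s in α..β, F n s) atTop (𝓝 (f β - f α)) := by
    have : (fun n => ∫ s in α..β, F n s)
        = fun n => (∫ s in β..(β + h n), f s) / h n - (∫ s in α..(α + h n), f s) / h n := by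
      funext n; rw [hint n, sub_div]
    rw [this]
    exact (hend β).sub (hend α)
  -- dominated convergence on the set integral
  have hset : ∀ n, ∫ s in α..β, F n s = ∫ s in Set.Ioc α β, F n s := fun n =>
    intervalIntegral.integral_of_le hab
  have hDCT : Tendsto (fun n => ∫ s in Set.Ioc α β, F n s) atTop
      (𝓝 (∫ s in Set.Ioc α β, deriv f s)) := by
    refine tendsto_integral_of_dominated_convergence (fun _ => (K : ℝ)) ?_ ?_ ?_ ?_
    · intro n
      exact ((hcont.comp (continuous_id.add continuous_const)).sub hcont).div_const
        (h n) |>.aestronglyMeasurable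
    · exact integrable_const _
    · intro n
      exact Eventually.of_forall fun s => hbound n s
    · exact ae_restrict_of_ae hlim
  have := hIlim
  rw [show (fun n => ∫ s in α..β, F n s) = (fun n => ∫ s in Set.Ioc α β, F n s) from
    funext hset] at this
  exact tendsto_nhds_unique this hDCT

/-- A function `g : (0,a] × [0,b] → [0,∞)` is a *uniqueness bound* (Definition 1)
if for every `a' ∈ (0,a]` the only Lipschitz continuous function
`φ : [0,a'] → [0,∞)` (taking values in the domain `[0,b]` of `g`) satisfying
`φ'(t) ≤ g(t,φ(t))` for almost all `t ∈ (0,a']`, `φ(0) = 0` and `φ'(0) = 0`,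
is `φ ≡ 0` on `[0,a']`. -/
def IsUniquenessBound (a b : ℝ) (g : ℝ → ℝ → ℝ) : Prop :=
  ∀ a' ∈ Set.Ioc (0:ℝ) a, ∀ φ : ℝ → ℝ,
    (∃ K, LipschitzOnWith K φ (Set.Icc 0 a')) →
    (∀ t ∈ Set.Icc (0:ℝ) a', φ t ∈ Set.Icc (0:ℝ) b) →
    φ 0 = 0 →
    HasDerivWithinAt φ 0 (Set.Ici 0) 0 →
    (∀ᵐ t ∂volume, t ∈ Set.Ioc (0:ℝ) a' → ∀ y, HasDerivAt φ y t → y ≤ g t (φ t)) →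
    ∀ t ∈ Set.Icc (0:ℝ) a', φ t = 0


/-- Montel–Tonelli's Theorem: if `p : (0,a] → (0,∞)` is locally integrable with
`∫_0^a p(s) ds < +∞` and `ψ` is as in Osgood's Theorem, then `g(t,x) = p(t)ψ(x)`
is a uniqueness bound. -/
theorem isUniquenessBound_montel_tonelli (a b : ℝ) (ha : 0 < a) (hb : 0 < b)
    (p : ℝ → ℝ)
    (hp : ∀ t ∈ Set.Ioc (0:ℝ) a, 0 < p t)
    (hpint : IntegrableOn p (Set.Ioc 0 a))
    (ψ : ℝ → ℝ)
    (hψc : ContinuousOn ψ (Set.Icc 0 (2 * b)))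
    (hψnonneg : ∀ x ∈ Set.Icc (0:ℝ) (2 * b), 0 ≤ ψ x)
    (hψ0 : ψ 0 = 0)
    (hψpos : ∀ x ∈ Set.Ioc (0:ℝ) b, 0 < ψ x)
    (hψdiv : ∃ ε ∈ Set.Ioc (0:ℝ) b, ∫⁻ s in Set.Ioc (0:ℝ) ε, ENNReal.ofReal (1 / ψ s) = ⊤) :
    IsUniquenessBound a b (fun t x => p t * ψ x) := by
  rintro a' ⟨ha'0, ha'a⟩ φ ⟨K, hK⟩ hrange hφ0 - hder
  by_contra hcon
  push_neg at hcon
  obtain ⟨t₁, ht₁, hφt₁⟩ := hcon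
  simp only at hder
  -- extend φ to a global Lipschitz function f
  obtain ⟨f, hfK, hfeq⟩ := hK.extend_real
  have hfc : Continuous f := hfK.continuous
  have h0mem : (0:ℝ) ∈ Icc (0:ℝ) a' := ⟨le_rfl, ha'0.le⟩
  have hf0 : f 0 = 0 := by rw [← hfeq h0mem, hφ0]
  have hft₁ : 0 < f t₁ := by
    rw [← hfeq ht₁]
    exact lt_of_le_of_ne (hrange t₁ ht₁).1 (Ne.symm hφt₁)
  have ht₁0 : 0 < t₁ := by
    rcases lt_or_eq_of_le ht₁.1 with h | h
    · exact h
    · exact absurd (by rw [← h, hφ0]) (Ne.symm hφt₁)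
  have hfub : ∀ s ∈ Icc (0:ℝ) a', f s ≤ b := fun s hs => by
    rw [← hfeq hs]; exact (hrange s hs).2
  have hflb : ∀ s ∈ Icc (0:ℝ) a', 0 ≤ f s := fun s hs => by
    rw [← hfeq hs]; exact (hrange s hs).1
  -- the last zero T of f before t₁
  set S : Set ℝ := Icc 0 t₁ ∩ f ⁻¹' {0} with hSdef
  have hSne : S.Nonempty := ⟨0, ⟨le_rfl, ht₁0.le⟩, hf0⟩
  have hSclosed : IsClosed S := isClosed_Icc.inter (isClosed_singleton.preimage hfc)
  have hScomp : IsCompact S := isCompact_Icc.of_isClosed_subset hSclosed inter_subset_left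
  set T : ℝ := sSup S with hTdef
  have hT : T ∈ S := hScomp.sSup_mem hSne
  have hT0 : 0 ≤ T := hT.1.1
  have hTt₁le : T ≤ t₁ := hT.1.2
  have hfT : f T = 0 := hT.2
  have hTlt : T < t₁ := lt_of_le_of_ne hTt₁le (by
    intro h; rw [h] at hfT; exact absurd hfT hft₁.ne')
  have hTa' : T ≤ a' := hTt₁le.trans ht₁.2
  have hpos' : ∀ s ∈ Ioc T t₁, 0 < f s := by
    intro s hs
    have hsI : s ∈ Icc 0 a' := ⟨hT0.trans hs.1.le, hs.2.trans ht₁.2⟩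
    refine lt_of_le_of_ne (hflb s hsI) (Ne.symm fun h => ?_)
    exact absurd (le_csSup hScomp.bddAbove ⟨⟨hT0.trans hs.1.le, hs.2⟩, h⟩) (not_le.2 hs.1)
  -- ε and ε'
  obtain ⟨ε, ⟨hε0, hεb⟩, hεdiv⟩ := hψdiv
  set ε' : ℝ := min ε (f t₁) with hε'def
  have hε'0 : 0 < ε' := lt_min hε0 hft₁
  have hε'b : ε' ≤ b := (min_le_left _ _).trans hεb
  have hε'ε : ε' ≤ ε := min_le_left _ _
  have hε'ft₁ : ε' ≤ f t₁ := min_le_right _ _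
  -- continuity of 1/ψ on compact subintervals of (0, b]
  have hcont1ψ : ∀ x y : ℝ, 0 < x → y ≤ b → ContinuousOn (fun u => 1 / ψ u) (Icc x y) := by
    intro x y hx hy
    have hsub : Icc x y ⊆ Icc 0 (2 * b) := Icc_subset_Icc hx.le (by linarith)
    exact continuousOn_const.div (hψc.mono hsub)
      (fun u hu => (hψpos u ⟨hx.trans_le hu.1, hu.2.trans hy⟩).ne')
  -- divergence of the lintegral near 0 persists on Ioc 0 ε'
  set h : ℝ → ℝ≥0∞ := fun s => ENNReal.ofReal (1 / ψ s) with hhdef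
  have hfin : (∫⁻ s in Ioc ε' ε, h s) ≠ ⊤ := by
    obtain ⟨z, hzmem, hzmin⟩ := isCompact_Icc.exists_isMinOn (nonempty_Icc.2 hε'ε)
      ((hψc.mono (Icc_subset_Icc hε'0.le (by linarith))))
    have hc : 0 < ψ z := hψpos z ⟨hε'0.trans_le hzmem.1, hzmem.2.trans hεb⟩
    have hbd : ∀ s ∈ Ioc ε' ε, h s ≤ ENNReal.ofReal (1 / ψ z) := by
      intro s hs
      refine ENNReal.ofReal_le_ofReal ?_
      exact one_div_le_one_div_of_le hc (hzmin ⟨hs.1.le, hs.2⟩)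
    refine ne_top_of_le_ne_top (b := ENNReal.ofReal (1 / ψ z) * volume (Ioc ε' ε))
      (ENNReal.mul_ne_top ENNReal.ofReal_ne_top (by
        rw [Real.volume_Ioc]; exact ENNReal.ofReal_ne_top)) ?_
    calc (∫⁻ s in Ioc ε' ε, h s) ≤ ∫⁻ _ in Ioc ε' ε, ENNReal.ofReal (1 / ψ z) :=
          setLIntegral_mono measurable_const hbd
      _ = ENNReal.ofReal (1 / ψ z) * volume (Ioc ε' ε) := by
          rw [setLIntegral_const]
  have hdiv' : ∫⁻ s in Ioc 0 ε', h s = ⊤ := by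
    have hsplit : (∫⁻ s in Ioc 0 ε', h s) + (∫⁻ s in Ioc ε' ε, h s)
        = ∫⁻ s in Ioc 0 ε, h s := by
      rw [← lintegral_union measurableSet_Ioc (Ioc_disjoint_Ioc_of_le le_rfl),
        Ioc_union_Ioc_eq_Ioc hε'0.le hε'ε]
    by_contra hne
    exact absurd (hsplit ▸ hεdiv) (ENNReal.add_ne_top.2 ⟨hne, hfin⟩)
  -- the constant C
  set C : ℝ := ∫ s in Ioc (0:ℝ) a', p s with hCdef
  have hC0 : 0 ≤ C := setIntegral_nonneg measurableSet_Ioc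
    (fun x hx => (hp x ⟨hx.1, hx.2.trans ha'a⟩).le)
  -- find x₀ ∈ (0, ε') with ∫ (1/ψ) on Ioc x₀ ε' > C
  have hψaem : AEMeasurable h (volume.restrict (Ioc (0:ℝ) ε')) := by
    have : ContinuousOn (fun s => 1 / ψ s) (Ioc (0:ℝ) ε') := by
      refine continuousOn_const.div
        (hψc.mono (fun u hu => ⟨hu.1.le, hu.2.trans (by linarith)⟩))
        (fun u hu => (hψpos u ⟨hu.1, hu.2.trans hε'b⟩).ne')
    exact (ENNReal.measurable_ofReal.comp_aemeasurable
      (this.aemeasurable measurableSet_Ioc))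
  set ν : Measure ℝ := (volume.restrict (Ioc (0:ℝ) ε')).withDensity h with hνdef
  have hνIoc : ∀ x : ℝ, 0 ≤ x → ν (Ioc x ε') = ∫⁻ s in Ioc x ε', h s := by
    intro x hx
    rw [hνdef, withDensity_apply _ measurableSet_Ioc,
      Measure.restrict_restrict measurableSet_Ioc,
      inter_eq_self_of_subset_left (Ioc_subset_Ioc_left hx)]
  have hνtop : ν (Ioc 0 ε') = ⊤ := by rw [hνIoc 0 le_rfl]; exact hdiv'
  have hmono : Monotone (fun n : ℕ => Ioc (ε' / (n + 1)) ε') := by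
    intro m n hmn
    refine Ioc_subset_Ioc ?_ le_rfl
    have h1 : (0:ℝ) < (m:ℝ) + 1 := by positivity
    apply div_le_div_of_nonneg_left hε'0.le h1
    exact_mod_cast Nat.succ_le_succ hmn
  have hcup : (⋃ n : ℕ, Ioc (ε' / (n + 1)) ε') = Ioc 0 ε' := by
    ext u
    simp only [mem_iUnion, mem_Ioc]
    constructor
    · rintro ⟨n, h1, h2⟩
      exact ⟨lt_trans (by positivity) h1, h2⟩
    · rintro ⟨h1, h2⟩
      obtain ⟨n, hn⟩ := exists_nat_gt (ε' / u)
      refine ⟨n, ?_, h2⟩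
      rw [div_lt_iff₀ (by positivity)]
      have h3 : ε' / u < n + 1 := hn.trans (by linarith)
      rw [div_lt_iff₀ h1] at h3
      linarith
  have hsup : (⨆ n : ℕ, ν (Ioc (ε' / (n + 1)) ε')) = ⊤ := by
    rw [← Directed.measure_iUnion hmono.directed_le, hcup, hνtop]
  obtain ⟨n, hn⟩ : ∃ n : ℕ, ENNReal.ofReal C < ν (Ioc (ε' / (n + 1)) ε') := by
    rw [← lt_iSup_iff, hsup]
    exact ENNReal.ofReal_lt_top
  set x₀ : ℝ := ε' / (n + 1) with hx₀def
  have hx₀0 : 0 < x₀ := by positivity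
  have hx₀ε' : x₀ < ε' := by
    by_contra hc
    rw [Ioc_eq_empty (not_lt.2 (not_lt.1 hc)), measure_empty] at hn
    exact absurd hn (not_lt.2 zero_le)
  -- convert to a real integral
  have hIint : IntegrableOn (fun s => 1 / ψ s) (Ioc x₀ ε') :=
    ((hcont1ψ x₀ ε' hx₀0 hε'b).integrableOn_Icc).mono_set Ioc_subset_Icc_self
  have hInn : 0 ≤ᵐ[volume.restrict (Ioc x₀ ε')] fun s => 1 / ψ s := by
    refine (ae_restrict_iff' measurableSet_Ioc).2 (Eventually.of_forall fun s hs => ?_)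
    exact le_of_lt (by
      have := hψpos s ⟨hx₀0.trans hs.1, hs.2.trans hε'b⟩
      positivity)
  set I : ℝ := ∫ s in Ioc x₀ ε', 1 / ψ s with hIdef
  have hlink : ENNReal.ofReal I = ∫⁻ s in Ioc x₀ ε', h s :=
    ofReal_integral_eq_lintegral_ofReal hIint hInn
  have hCI : C < I := by
    rw [hνIoc x₀ hx₀0.le, ← hlink] at hn
    exact (ENNReal.ofReal_lt_ofReal_iff_of_nonneg hC0).1 hn
  -- choose t ∈ (T, t₁) with f t < x₀
  obtain ⟨t, hTt, htlt, hftx₀⟩ : ∃ t, T < t ∧ t < t₁ ∧ f t < x₀ := by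
    have h1 : ∀ᶠ s in 𝓝[>] T, f s < x₀ := by
      apply nhdsWithin_le_nhds
      have : Tendsto f (𝓝 T) (𝓝 (f T)) := hfc.continuousAt
      rw [hfT] at this
      exact this.eventually_lt_const hx₀0
    have h2 : ∀ᶠ s in 𝓝[>] T, s < t₁ :=
      nhdsWithin_le_nhds (tendsto_id.eventually_lt_const hTlt)
    have h3 : ∀ᶠ s in 𝓝[>] T, T < s := eventually_mem_nhdsWithin
    obtain ⟨s, ⟨hs1, hs2⟩, hs3⟩ := ((h3.and h2).and h1).exists
    exact ⟨s, hs1, hs2, hs3⟩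
  have htt₁ : t ≤ t₁ := htlt.le
  have ht0 : 0 < t := hT0.trans_lt hTt
  -- minimum m of f on [t, t₁]
  obtain ⟨z₀, hz₀mem, hz₀min⟩ := isCompact_Icc.exists_isMinOn (nonempty_Icc.2 htt₁)
    hfc.continuousOn
  set m : ℝ := f z₀ with hmdef
  have hm0 : 0 < m := hpos' z₀ ⟨hTt.trans_le hz₀mem.1, hz₀mem.2⟩
  have hz₀a' : z₀ ∈ Icc 0 a' := ⟨ht0.le.trans hz₀mem.1, hz₀mem.2.trans ht₁.2⟩
  have hmb : m ≤ b := hfub z₀ hz₀a'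
  have hmle : ∀ s ∈ Icc t t₁, m ≤ f s := fun s hs => hz₀min hs
  have hmft : m ≤ f t := hmle t ⟨le_rfl, htt₁⟩
  have hmx₀ : m < x₀ := lt_of_le_of_lt hmft hftx₀
  -- the clamped reciprocal q and its antiderivative Φ
  set clamp : ℝ → ℝ := fun u => max m (min u b) with hclampdef
  have hclamp_mem : ∀ u, clamp u ∈ Icc m b := fun u =>
    ⟨le_max_left _ _, max_le hmb (min_le_right _ _)⟩
  have hψclamp_pos : ∀ u, 0 < ψ (clamp u) := fun u =>
    hψpos _ ⟨hm0.trans_le (hclamp_mem u).1, (hclamp_mem u).2⟩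
  set q : ℝ → ℝ := fun u => 1 / ψ (clamp u) with hqdef
  have hclampc : Continuous clamp :=
    continuous_const.max (continuous_id.min continuous_const)
  have hqc : Continuous q := by
    refine continuous_const.div ?_ (fun u => (hψclamp_pos u).ne')
    exact (hψc.mono (Icc_subset_Icc hm0.le (by linarith))).comp_continuous hclampc hclamp_mem
  have hq_pos : ∀ u, 0 < q u := fun u => by
    have := hψclamp_pos u; positivity
  have hq_eq : ∀ u ∈ Icc m b, q u = 1 / ψ u := by
    intro u hu
    have : clamp u = u := by
      rw [hclampdef]; simp only
      rw [min_eq_left hu.2, max_eq_right hu.1]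
    rw [hqdef]; simp only [this]
  -- global bound M for q
  obtain ⟨z₁, hz₁mem, hz₁min⟩ := isCompact_Icc.exists_isMinOn (nonempty_Icc.2 hmb)
    (hψc.mono (Icc_subset_Icc hm0.le (by linarith)))
  have hc₁ : 0 < ψ z₁ := hψpos z₁ ⟨hm0.trans_le hz₁mem.1, hz₁mem.2⟩
  set M : ℝ := 1 / ψ z₁ with hMdef
  have hM0 : 0 < M := by positivity
  have hqM : ∀ u, q u ≤ M := fun u =>
    one_div_le_one_div_of_le hc₁ (hz₁min (hclamp_mem u))
  set Φ : ℝ → ℝ := fun x => ∫ u in (0:ℝ)..x, q u with hΦdef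
  have hΦd : ∀ x, HasDerivAt Φ (q x) x := fun x =>
    (hqc.integral_hasStrictDerivAt 0 x).hasDerivAt
  have hΦsub : ∀ x y : ℝ, Φ x - Φ y = ∫ u in y..x, q u := fun x y =>
    intervalIntegral.integral_interval_sub_left (hqc.intervalIntegrable 0 x)
      (hqc.intervalIntegrable 0 y)
  have hΦlip : LipschitzWith M.toNNReal Φ := by
    refine LipschitzWith.of_dist_le_mul fun x y => ?_
    rw [Real.dist_eq, Real.dist_eq, hΦsub x y]
    have hbq : ∀ u ∈ Set.uIoc y x, ‖q u‖ ≤ M := fun u _ => by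
      rw [Real.norm_eq_abs, abs_of_pos (hq_pos u)]; exact hqM u
    calc |∫ u in y..x, q u| ≤ M * |x - y| :=
          intervalIntegral.norm_integral_le_of_norm_le_const hbq
      _ = ↑M.toNNReal * |x - y| := by rw [Real.coe_toNNReal M hM0.le]
  set D : ℝ → ℝ := Φ ∘ f with hDdef
  have hDlip : LipschitzWith (M.toNNReal * K) D := hΦlip.comp hfK
  -- a.e. derivative bound for D
  have hane : ∀ᵐ s : ℝ, s ≠ a' := by
    rw [ae_iff]
    have : {s : ℝ | ¬ s ≠ a'} = {a'} := by ext s; simp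
    rw [this]; exact Real.volume_singleton
  have hae : ∀ᵐ s, s ∈ Ioc t t₁ → deriv D s ≤ p s := by
    filter_upwards [hfK.ae_differentiableAt, hder, hane] with s hdf hds hsa hs
    have hs0a' : s ∈ Ioc 0 a' := ⟨ht0.trans hs.1, hs.2.trans ht₁.2⟩
    have hslt : s < a' := lt_of_le_of_ne hs0a'.2 hsa
    have hy : HasDerivAt f (deriv f s) s := hdf.hasDerivAt
    have hφy : HasDerivAt φ (deriv f s) s := by
      refine hy.congr_of_eventuallyEq ?_
      filter_upwards [Ioo_mem_nhds hs0a'.1 hslt] with u hu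
      exact hfeq ⟨hu.1.le, hu.2.le⟩
    have hbnd := hds hs0a' _ hφy
    have hφs : φ s = f s := hfeq ⟨hs0a'.1.le, hs0a'.2⟩
    rw [hφs] at hbnd
    have hfs_mem : f s ∈ Icc m b :=
      ⟨hmle s ⟨hs.1.le, hs.2⟩, hfub s ⟨hs0a'.1.le, hs0a'.2⟩⟩
    have hψfs : 0 < ψ (f s) := hψpos _ ⟨hm0.trans_le hfs_mem.1, hfs_mem.2⟩
    have hD : HasDerivAt D (q (f s) * deriv f s) s := (hΦd (f s)).comp s hy
    rw [hD.deriv, hq_eq _ hfs_mem, one_div_mul_eq_div]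
    exact (div_le_iff₀ hψfs).2 hbnd
  -- key inequality : D t₁ - D t ≤ C
  haveI hfinvol : IsFiniteMeasure (volume.restrict (Ioc t t₁)) :=
    ⟨by rw [Measure.restrict_apply_univ]; exact measure_Ioc_lt_top⟩
  have hDint : IntegrableOn (deriv D) (Ioc t t₁) := by
    refine ⟨(measurable_deriv D).aestronglyMeasurable, ?_⟩
    exact HasFiniteIntegral.of_bounded (C := ((M.toNNReal * K : ℝ≥0) : ℝ))
      (Eventually.of_forall fun s => norm_deriv_le_of_lipschitz hDlip)
  have hkey : D t₁ - D t ≤ C := by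
    rw [lipschitz_ftc hDlip htt₁]
    have h1 : ∫ s in Ioc t t₁, deriv D s ≤ ∫ s in Ioc t t₁, p s := by
      refine integral_mono_ae hDint
        (hpint.mono_set (fun u hu => ⟨ht0.trans hu.1, hu.2.trans (ht₁.2.trans ha'a)⟩)) ?_
      exact (ae_restrict_iff' measurableSet_Ioc).2 hae
    have h2 : ∫ s in Ioc t t₁, p s ≤ C := by
      refine setIntegral_mono_set
        (hpint.mono_set (fun u hu => ⟨hu.1, hu.2.trans ha'a⟩)) ?_ ?_
      · refine (ae_restrict_iff' measurableSet_Ioc).2 (Eventually.of_forall fun u hu => ?_)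
        exact (hp u ⟨hu.1, hu.2.trans ha'a⟩).le
      · exact HasSubset.Subset.eventuallyLE
          (fun u hu => ⟨ht0.trans hu.1, hu.2.trans ht₁.2⟩)
    linarith
  -- lower bound : D t₁ - D t ≥ I > C
  have hft0 : 0 < f t := hpos' t ⟨hTt, htt₁⟩
  have hval : D t₁ - D t = ∫ u in (f t)..(f t₁), q u := hΦsub (f t₁) (f t)
  have hq_int : ∀ x y : ℝ, IntervalIntegrable q volume x y := fun x y =>
    hqc.intervalIntegrable x y
  have hsplit1 : ∫ u in (f t)..(f t₁), q u
      = (∫ u in (f t)..ε', q u) + ∫ u in ε'..(f t₁), q u :=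
    (intervalIntegral.integral_add_adjacent_intervals (hq_int _ _) (hq_int _ _)).symm
  have hsplit2 : ∫ u in (f t)..ε', q u
      = (∫ u in (f t)..x₀, q u) + ∫ u in x₀..ε', q u :=
    (intervalIntegral.integral_add_adjacent_intervals (hq_int _ _) (hq_int _ _)).symm
  have hnn1 : 0 ≤ ∫ u in (f t)..x₀, q u :=
    intervalIntegral.integral_nonneg hftx₀.le (fun u _ => (hq_pos u).le)
  have hnn2 : 0 ≤ ∫ u in ε'..(f t₁), q u :=
    intervalIntegral.integral_nonneg hε'ft₁ (fun u _ => (hq_pos u).le)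
  have hmid : ∫ u in x₀..ε', q u = I := by
    rw [intervalIntegral.integral_of_le hx₀ε'.le, hIdef]
    refine setIntegral_congr_fun measurableSet_Ioc (fun u hu => ?_)
    exact hq_eq u ⟨(hmx₀.trans hu.1).le, hu.2.trans hε'b⟩
  have : C < D t₁ - D t := by
    rw [hval, hsplit1, hsplit2, hmid]
    linarith
  linarith
end

section
/- (Nagumo bound) Let a, b > 0. The function g : (0,a] × [0,b] → [0,∞) defined by g(t,x) = x/t is a uniqueness bound. -/
open MeasureTheory Set Filter Topology

-- core: Lipschitz with a.e. deriv ≤ 0 on (c,d) implies f d ≤ f c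
lemma key_antitone {K : NNReal} {f : ℝ → ℝ} (hf : LipschitzWith K f) {c d : ℝ} (hcd : c ≤ d)
    (h : ∀ᵐ x ∂volume, x ∈ Set.Ioo c d → ∀ y, HasDerivAt f y x → y ≤ 0) : f d ≤ f c := by
  set μ := volume.restrict (Set.Ioo c d) with hμ
  haveI : IsFiniteMeasure μ := ⟨by
    rw [hμ, Measure.restrict_apply_univ]
    exact measure_Ioo_lt_top⟩
  set h' : ℕ → ℝ := fun n => ((n : ℝ) + 1)⁻¹ with hh'
  have h'pos : ∀ n, 0 < h' n := fun n => by positivity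
  have h'lim : Tendsto h' atTop (𝓝 0) := by
    simpa [hh', one_div] using tendsto_one_div_add_atTop_nhds_zero_nat (𝕜 := ℝ)
  set F : ℕ → ℝ → ℝ := fun n x => (f (x + h' n) - f x) / h' n with hF
  have hfc : Continuous f := hf.continuous
  -- dominated convergence
  have hdiff : ∀ᵐ x ∂volume, DifferentiableAt ℝ f x := hf.ae_differentiableAt_of_real
  have hlim : ∀ᵐ x ∂μ, Tendsto (fun n => F n x) atTop (𝓝 (deriv f x)) := by
    refine ae_restrict_of_ae ?_
    filter_upwards [hdiff] with x hx
    have hd : HasDerivAt f (deriv f x) x := hx.hasDerivAt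
    rw [hasDerivAt_iff_tendsto_slope] at hd
    have hseq : Tendsto (fun n => x + h' n) atTop (𝓝[≠] x) := by
      apply tendsto_nhdsWithin_of_tendsto_nhds_of_eventually_within
      · simpa using tendsto_const_nhds.add h'lim
      · exact Eventually.of_forall fun n => by
          simp only [mem_compl_iff, mem_singleton_iff]
          nlinarith [h'pos n]
    have := hd.comp hseq
    convert this using 2 with n
    simp [hF, slope, (h'pos n).ne', div_eq_inv_mul]
  have hInt : Tendsto (fun n => ∫ x, F n x ∂μ) atTop (𝓝 (∫ x, deriv f x ∂μ)) := by
    refine tendsto_integral_of_dominated_convergence (fun _ => (K : ℝ)) ?_ ?_ ?_ hlim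
    · intro n
      exact (((hfc.comp (continuous_id.add continuous_const)).sub hfc).div_const _).aestronglyMeasurable
    · exact integrable_const _
    · intro n
      refine Eventually.of_forall fun x => ?_
      have h1 : dist (f (x + h' n)) (f x) ≤ (K : ℝ) * dist (x + h' n) x := hf.dist_le_mul _ _
      rw [Real.dist_eq, Real.dist_eq] at h1
      have h2 : |x + h' n - x| = h' n := by
        rw [add_sub_cancel_left, abs_of_pos (h'pos n)]
      rw [h2] at h1
      have : |F n x| = |f (x + h' n) - f x| / h' n := by
        rw [hF]; rw [abs_div, abs_of_pos (h'pos n)]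
      rw [Real.norm_eq_abs, this]
      rw [div_le_iff₀ (h'pos n)]
      linarith
  -- the integral of deriv is ≤ 0
  have hneg : (∫ x, deriv f x ∂μ) ≤ 0 := by
    apply integral_nonpos_of_ae
    have h1 : ∀ᵐ x ∂μ, x ∈ Set.Ioo c d → ∀ y, HasDerivAt f y x → y ≤ 0 := ae_restrict_of_ae h
    have h2 : ∀ᵐ x ∂μ, DifferentiableAt ℝ f x := ae_restrict_of_ae hdiff
    have h3 : ∀ᵐ x ∂μ, x ∈ Set.Ioo c d := ae_restrict_mem measurableSet_Ioo
    filter_upwards [h1, h2, h3] with x hx1 hx2 hx3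
    exact hx1 hx3 _ hx2.hasDerivAt
  -- compute the integral of F n
  have hII : ∀ n, ∫ x, F n x ∂μ =
      ((∫ u in d..(d + h' n), f u) - ∫ u in c..(c + h' n), f u) / h' n := by
    intro n
    have e1 : ∫ x, F n x ∂μ = ∫ x in c..d, F n x := by
      rw [intervalIntegral.integral_of_le hcd, hμ, ← integral_Ioc_eq_integral_Ioo]
    have i1 : IntervalIntegrable (fun x => f (x + h' n)) volume c d :=
      (hfc.comp (continuous_id.add continuous_const)).intervalIntegrable _ _
    have i2 : IntervalIntegrable f volume c d := hfc.intervalIntegrable _ _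
    have e2 : ∫ x in c..d, F n x =
        ((∫ x in c..d, f (x + h' n)) - ∫ x in c..d, f x) / h' n := by
      simp only [hF, div_eq_mul_inv]
      rw [intervalIntegral.integral_mul_const, intervalIntegral.integral_sub i1 i2]
    have e3 : (∫ x in c..d, f (x + h' n)) = ∫ x in (c + h' n)..(d + h' n), f x :=
      intervalIntegral.integral_comp_add_right ..
    have a1 : (∫ x in c..(c + h' n), f x) + ∫ x in (c + h' n)..(d + h' n), f x
        = ∫ x in c..(d + h' n), f x :=
      intervalIntegral.integral_add_adjacent_intervals (hfc.intervalIntegrable _ _)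
        (hfc.intervalIntegrable _ _)
    have a2 : (∫ x in c..d, f x) + ∫ x in d..(d + h' n), f x = ∫ x in c..(d + h' n), f x :=
      intervalIntegral.integral_add_adjacent_intervals (hfc.intervalIntegrable _ _)
        (hfc.intervalIntegrable _ _)
    rw [e1, e2, e3]
    congr 1
    linarith
  -- boundary limits
  have hbdry : ∀ e : ℝ, Tendsto (fun n => (∫ u in e..(e + h' n), f u) / h' n) atTop (𝓝 (f e)) := by
    intro e
    have key : ∀ n, |(∫ u in e..(e + h' n), f u) / h' n - f e| ≤ (K : ℝ) * h' n := by
      intro n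
      have hconst : (∫ _ in e..(e + h' n), f e) = h' n * f e := by
        simp [intervalIntegral.integral_const, add_sub_cancel_left, smul_eq_mul]
      have hsub : (∫ u in e..(e + h' n), f u) / h' n - f e
          = (∫ u in e..(e + h' n), (f u - f e)) / h' n := by
        rw [intervalIntegral.integral_sub (hfc.intervalIntegrable _ _)
          (intervalIntegrable_const), hconst]
        rw [sub_div, mul_div_cancel_left₀ _ (h'pos n).ne']
      rw [hsub, abs_div, abs_of_pos (h'pos n), div_le_iff₀ (h'pos n)]
      have hb : ∀ u ∈ Set.uIoc e (e + h' n), ‖f u - f e‖ ≤ (K : ℝ) * h' n := by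
        intro u hu
        rw [Set.uIoc_of_le (by linarith [h'pos n])] at hu
        have : dist (f u) (f e) ≤ (K : ℝ) * dist u e := hf.dist_le_mul _ _
        rw [Real.dist_eq, Real.dist_eq] at this
        have : |f u - f e| ≤ (K : ℝ) * |u - e| := this
        refine this.trans ?_
        have : |u - e| ≤ h' n := by
          rw [abs_of_nonneg (by linarith [hu.1.le])]
          linarith [hu.2]
        nlinarith [this, NNReal.coe_nonneg K]
      have := intervalIntegral.norm_integral_le_of_norm_le_const hb
      rw [Real.norm_eq_abs] at this
      refine this.trans ?_
      rw [add_sub_cancel_left, abs_of_pos (h'pos n)]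
    have h0 : Tendsto (fun n => (∫ u in e..(e + h' n), f u) / h' n - f e) atTop (𝓝 0) := by
      apply squeeze_zero_norm (fun n => by simpa [Real.norm_eq_abs] using key n)
      simpa using (h'lim.const_mul (K : ℝ))
    simpa using h0.add_const (f e)
  have hlim2 : Tendsto (fun n => ∫ x, F n x ∂μ) atTop (𝓝 (f d - f c)) := by
    simp only [hII, sub_div]
    exact (hbdry d).sub (hbdry c)
  have := tendsto_nhds_unique hInt hlim2
  linarith [this ▸ hneg]

/-- Nagumo's Theorem: `g(t,x) = x/t` is a uniqueness bound. -/
theorem isUniquenessBound_nagumo (a b : ℝ) (ha : 0 < a) (hb : 0 < b) :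
    IsUniquenessBound a b (fun t x => x / t) := by
  rintro a' ⟨ha'0, ha'a⟩ φ ⟨K, hK⟩ hrange h0 hd0 hae t ⟨ht0, hta⟩
  rcases eq_or_lt_of_le ht0 with rfl | ht0
  · exact h0
  -- φ t ≥ 0
  have hφt0 : 0 ≤ φ t := (hrange t ⟨ht0.le, hta⟩).1
  -- it suffices to show φ t < ε * t for all ε > 0
  suffices hsuff : ∀ ε > (0:ℝ), φ t ≤ ε * t by
    refine le_antisymm ?_ hφt0
    by_contra hpos
    push_neg at hpos
    have h2 := hsuff (φ t / (2 * t)) (by positivity)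
    have h3 : φ t / (2 * t) * t = φ t / 2 := by field_simp
    rw [h3] at h2; linarith
  intro ε hε
  -- slope at 0 tends to 0
  have hslope : Tendsto (slope φ 0) (𝓝[>] 0) (𝓝 0) := by
    rw [hasDerivWithinAt_iff_tendsto_slope] at hd0
    have : Set.Ici (0:ℝ) \ {0} = Set.Ioi 0 := by
      ext x; simp [lt_iff_le_and_ne, eq_comm, and_comm]
    rwa [this] at hd0
  have hev1 : ∀ᶠ s in 𝓝[>] (0:ℝ), slope φ 0 s < ε := hslope.eventually_lt_const hε
  have hev2 : ∀ᶠ s in 𝓝[>] (0:ℝ), s ∈ Set.Ioo 0 t :=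
    Ioo_mem_nhdsGT_of_mem ⟨le_refl 0, ht0⟩
  obtain ⟨s, hsε, hs0, hst⟩ :
      ∃ s : ℝ, slope φ 0 s < ε ∧ 0 < s ∧ s < t := by
    obtain ⟨s, h1, h2⟩ := (hev1.and hev2).exists
    exact ⟨s, h1, h2.1, h2.2⟩
  have hsε' : φ s / s < ε := by
    have : slope φ 0 s = φ s / s := by simp [slope, h0, div_eq_inv_mul]
    rwa [this] at hsε
  -- ψ = φ / id is Lipschitz on [s, t]
  set ψ : ℝ → ℝ := fun u => φ u / u with hψ
  have hsub : Set.Icc s t ⊆ Set.Icc 0 a' := Set.Icc_subset_Icc hs0.le hta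
  set C : ℝ := ((K : ℝ) * a' + b) / s ^ 2 with hC
  have hCpos : 0 ≤ C := by
    have := NNReal.coe_nonneg K
    positivity
  have hψL : LipschitzOnWith C.toNNReal ψ (Set.Icc s t) := by
    rw [lipschitzOnWith_iff_dist_le_mul]
    intro u hu v hv
    have hu' := hsub hu
    have hv' := hsub hv
    have hu0 : 0 < u := hs0.trans_le hu.1
    have hv0 : 0 < v := hs0.trans_le hv.1
    have hd : dist (φ u) (φ v) ≤ (K : ℝ) * dist u v :=
      (lipschitzOnWith_iff_dist_le_mul.1 hK) u hu' v hv'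
    rw [Real.dist_eq, Real.dist_eq] at hd ⊢
    rw [Real.coe_toNNReal _ hCpos]
    have hφub : φ v ≤ b := (hrange v hv').2
    have hφlb : 0 ≤ φ v := (hrange v hv').1
    have e1 : ψ u - ψ v = ((φ u - φ v) * v + φ v * (v - u)) / (u * v) := by
      simp only [hψ]
      rw [div_sub_div _ _ hu0.ne' hv0.ne']
      ring
    rw [e1, abs_div, abs_of_pos (mul_pos hu0 hv0)]
    have hnum : |(φ u - φ v) * v + φ v * (v - u)| ≤ ((K : ℝ) * a' + b) * |u - v| := by
      refine (abs_add_le _ _).trans ?_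
      rw [abs_mul, abs_mul, abs_of_pos hv0, abs_of_nonneg hφlb, abs_sub_comm v u]
      have hva : v ≤ a' := hv'.2
      have t1 : |φ u - φ v| * v ≤ (K : ℝ) * |u - v| * v :=
        mul_le_mul_of_nonneg_right hd hv0.le
      have t2 : (K : ℝ) * |u - v| * v ≤ (K : ℝ) * |u - v| * a' :=
        mul_le_mul_of_nonneg_left hva (mul_nonneg (NNReal.coe_nonneg K) (abs_nonneg _))
      have t3 : φ v * |u - v| ≤ b * |u - v| :=
        mul_le_mul_of_nonneg_right hφub (abs_nonneg _)
      nlinarith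
    have hden : s ^ 2 ≤ u * v := by nlinarith [hu.1, hv.1]
    calc |(φ u - φ v) * v + φ v * (v - u)| / (u * v)
        ≤ ((K : ℝ) * a' + b) * |u - v| / s ^ 2 := by
          apply div_le_div₀ (by positivity) hnum (by positivity) hden
      _ = C * |u - v| := by rw [hC]; ring
  obtain ⟨g, hgL, hgeq⟩ := hψL.extend_real
  -- derivative condition for g
  have hg' : ∀ᵐ x ∂volume, x ∈ Set.Ioo s t → ∀ y, HasDerivAt g y x → y ≤ 0 := by
    filter_upwards [hae] with x hx hxmem y hy
    have hx0 : 0 < x := hs0.trans hxmem.1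
    have hxa : x ∈ Set.Ioc 0 a' := ⟨hx0, (hxmem.2.le).trans hta⟩
    have hnb : Set.Ioo s t ∈ 𝓝 x := isOpen_Ioo.mem_nhds hxmem
    have heq : ψ =ᶠ[𝓝 x] g :=
      Filter.eventuallyEq_of_mem hnb fun u hu => hgeq (Set.Ioo_subset_Icc_self hu)
    have hψd : HasDerivAt ψ y x := by
      rw [Filter.EventuallyEq.hasDerivAt_iff heq]
      exact hy
    have hφd : HasDerivAt φ (1 * ψ x + x * y) x := by
      have hmul : HasDerivAt (fun u => u * ψ u) (1 * ψ x + x * y) x :=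
        (hasDerivAt_id x).mul hψd
      have heq2 : (fun u => u * ψ u) =ᶠ[𝓝 x] φ :=
        Filter.eventuallyEq_of_mem hnb fun u hu => by
          have hu0 : (0:ℝ) < u := hs0.trans hu.1
          simp [hψ, mul_div_cancel₀, hu0.ne']
      exact heq2.hasDerivAt_iff.1 hmul
    have := hx hxa _ hφd
    have hψx : ψ x = φ x / x := rfl
    nlinarith [this, hx0]
  have hmono : g t ≤ g s := key_antitone hgL hst.le hg'
  rw [← hgeq (Set.right_mem_Icc.2 hst.le), ← hgeq (Set.left_mem_Icc.2 hst.le)] at hmono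
  have : φ t / t < ε := lt_of_le_of_lt hmono hsε'
  rw [div_lt_iff₀ ht0] at this
  linarith
end

section
/- (Van Kampen bound) Let a, b > 0 and let q : (0,a] → [0,∞) be a measurable function with ∫_0^a q(s)/s ds < +∞. Then g : (0,a] × [0,b] → [0,∞) defined by g(t,x) = (1 + q(t)) x / t is a uniqueness bound. -/
open MeasureTheory Set

open Filter Topology intervalIntegral
open scoped NNReal

lemma seq_tendsto_aux : Tendsto (fun n : ℕ => (1:ℝ)/(n+1)) atTop (𝓝[>] (0:ℝ)) := by
  apply tendsto_nhdsWithin_of_tendsto_nhds_of_eventually_within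
  · exact tendsto_one_div_add_atTop_nhds_zero_nat
  · filter_upwards with n
    have : (0:ℝ) < 1/(n+1) := by positivity
    exact this

lemma slope_seq_tendsto {f : ℝ → ℝ} {x y : ℝ} (h : HasDerivAt f y x) :
    Tendsto (fun n : ℕ => (f (x + 1/(n+1)) - f x) * (n+1)) atTop (𝓝 y) := by
  have hslope := hasDerivAt_iff_tendsto_slope.1 h
  have hx : Tendsto (fun n : ℕ => x + 1/(n+1)) atTop (𝓝[≠] x) := by
    apply tendsto_nhdsWithin_of_tendsto_nhds_of_eventually_within
    · simpa using (tendsto_const_nhds (x := x)).add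
        (tendsto_nhdsWithin_iff.1 seq_tendsto_aux).1
    · filter_upwards with n
      have : (0:ℝ) < 1/(n+1) := by positivity
      simp only [mem_compl_iff, mem_singleton_iff]
      intro hc
      nlinarith [hc]
  have := hslope.comp hx
  refine this.congr fun n => ?_
  have h1 : (0:ℝ) < 1/((n:ℝ)+1) := by positivity
  have h2 : ((n:ℝ)+1) ≠ 0 := by positivity
  rw [Function.comp, slope_def_field]
  rw [add_sub_cancel_left, div_eq_mul_inv, one_div, inv_inv]

lemma abs_deriv_le_of_lipschitz {K : ℝ≥0} {f : ℝ → ℝ} (hf : LipschitzWith K f) (x : ℝ) :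
    |deriv f x| ≤ K := by
  have h1 : ‖fderiv ℝ f x‖ ≤ K := norm_fderiv_le_of_lipschitz ℝ hf
  calc |deriv f x| = ‖(fderiv ℝ f x) 1‖ := by rw [fderiv_apply_one_eq_deriv]; rfl
  _ ≤ ‖fderiv ℝ f x‖ * ‖(1:ℝ)‖ := (fderiv ℝ f x).le_opNorm 1
  _ ≤ K := by simpa using h1

lemma lipschitzWith_sub_eq_integral_deriv {K : ℝ≥0} {f : ℝ → ℝ}
    (hf : LipschitzWith K f) {A B : ℝ} (hAB : A ≤ B) :
    f B - f A = ∫ t in Set.Ioc A B, deriv f t := by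
  have hfc : Continuous f := hf.continuous
  set g : ℕ → ℝ → ℝ := fun n x => (f (x + 1/(n+1)) - f x) * (n+1) with hg
  -- limit 1 : integrals of g n converge to integral of deriv f
  have hlim1 : Tendsto (fun n => ∫ x in Set.Ioc A B, g n x) atTop
      (𝓝 (∫ x in Set.Ioc A B, deriv f x)) := by
    apply tendsto_integral_of_dominated_convergence (fun _ => (K:ℝ))
    · intro n
      exact ((hfc.comp (continuous_id.add continuous_const)).sub hfc).mul
        continuous_const |>.aestronglyMeasurable
    · exact integrableOn_const measure_Ioc_lt_top.ne enorm_ne_top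
    · intro n
      filter_upwards with x
      have h1 : (0:ℝ) < 1/((n:ℝ)+1) := by positivity
      have := hf.dist_le_mul (x + 1/(n+1)) x
      rw [Real.dist_eq, Real.dist_eq] at this
      simp only [add_sub_cancel_left, abs_of_pos h1] at this
      rw [Real.norm_eq_abs, abs_mul, abs_of_pos (by positivity : (0:ℝ) < (n:ℝ)+1)]
      calc |f (x + 1/(n+1)) - f x| * ((n:ℝ)+1) ≤ (K * (1/(n+1))) * ((n:ℝ)+1) := by
            apply mul_le_mul_of_nonneg_right this (by positivity)
      _ = K := by field_simp
    · have had := hf.ae_differentiableAt_real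
      refine (ae_restrict_of_ae ?_)
      filter_upwards [had] with x hx
      exact slope_seq_tendsto hx.hasDerivAt
  -- limit 2 : integrals of g n converge to f B - f A
  have hInt : ∀ u v : ℝ, IntervalIntegrable f volume u v := fun u v =>
    hfc.intervalIntegrable u v
  set F : ℝ → ℝ := fun y => ∫ x in A..y, f x with hF
  have hFd : ∀ y : ℝ, HasDerivAt F (f y) y := fun y =>
    intervalIntegral.integral_hasDerivAt_right (hInt A y)
      (hfc.stronglyMeasurableAtFilter volume _) hfc.continuousAt
  have key : ∀ n : ℕ, ∫ x in Set.Ioc A B, g n x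
      = (F (B + 1/(n+1)) - F B) * (n+1) - (F (A + 1/(n+1)) - F A) * (n+1) := by
    intro n
    have h1 : (0:ℝ) < 1/((n:ℝ)+1) := by positivity
    have e1 : ∫ x in Set.Ioc A B, g n x = ∫ x in A..B, g n x :=
      (intervalIntegral.integral_of_le hAB).symm
    rw [e1, hg]
    have i1 : IntervalIntegrable (fun x => f (x + 1/(n+1))) volume A B :=
      (hfc.comp (continuous_id.add continuous_const)).intervalIntegrable A B
    rw [intervalIntegral.integral_mul_const, intervalIntegral.integral_sub i1 (hInt A B),
      intervalIntegral.integral_comp_add_right f (1/(n+1))]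
    have c1 : ∫ x in (A + 1/(n+1))..(B + 1/(n+1)), f x
        = F (B + 1/(n+1)) - F (A + 1/(n+1)) := by
      rw [hF]
      rw [intervalIntegral.integral_interval_sub_left (hInt A _) (hInt A _)]
    have c2 : (∫ x in A..B, f x) = F B - F A := by
      rw [hF]
      simp [intervalIntegral.integral_same]
    rw [c1, c2]
    ring
  have hlim2 : Tendsto (fun n => ∫ x in Set.Ioc A B, g n x) atTop (𝓝 (f B - f A)) := by
    simp only [key]
    exact (slope_seq_tendsto (hFd B)).sub (slope_seq_tendsto (hFd A))
  exact tendsto_nhds_unique hlim2 hlim1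

lemma lipschitz_sub_le_integral {K : ℝ≥0} {f : ℝ → ℝ} (hf : LipschitzWith K f) {A B : ℝ}
    (hAB : A ≤ B) {r : ℝ → ℝ} (hr : IntegrableOn r (Set.Ioc A B))
    (hle : ∀ᵐ x ∂(volume.restrict (Set.Ioc A B)), ∀ y, HasDerivAt f y x → y ≤ r x) :
    f B - f A ≤ ∫ x in Set.Ioc A B, r x := by
  rw [lipschitzWith_sub_eq_integral_deriv hf hAB]
  have hdm : AEStronglyMeasurable (deriv f) (volume.restrict (Set.Ioc A B)) :=
    (measurable_deriv f).aestronglyMeasurable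
  have hdint : IntegrableOn (deriv f) (Set.Ioc A B) := by
    refine Integrable.mono' (g := fun _ => (K:ℝ)) (integrableOn_const measure_Ioc_lt_top.ne enorm_ne_top)
      hdm ?_
    filter_upwards with x
    simpa using abs_deriv_le_of_lipschitz hf x
  apply integral_mono_ae hdint hr
  have had : ∀ᵐ x ∂(volume.restrict (Set.Ioc A B)), DifferentiableAt ℝ f x :=
    ae_restrict_of_ae hf.ae_differentiableAt_real
  filter_upwards [hle, had] with x h1 h2
  exact h1 _ h2.hasDerivAt

lemma lipschitzOnWith_mul {f g : ℝ → ℝ} {s : Set ℝ} {Kf Kg : ℝ≥0} {Mf Mg : ℝ}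
    (hf : LipschitzOnWith Kf f s) (hg : LipschitzOnWith Kg g s)
    (hMf : ∀ x ∈ s, |f x| ≤ Mf) (hMg : ∀ x ∈ s, |g x| ≤ Mg) :
    ∃ K : ℝ≥0, LipschitzOnWith K (fun x => f x * g x) s := by
  rcases s.eq_empty_or_nonempty with rfl | ⟨z, hz⟩
  · exact ⟨0, by simp [LipschitzOnWith]⟩
  have hMf0 : 0 ≤ Mf := le_trans (abs_nonneg _) (hMf z hz)
  have hMg0 : 0 ≤ Mg := le_trans (abs_nonneg _) (hMg z hz)
  refine ⟨Real.toNNReal (Mf * Kg + Mg * Kf), ?_⟩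
  rw [lipschitzOnWith_iff_dist_le_mul]
  intro x hx y hy
  have hfd := hf.dist_le_mul x hx y hy
  have hgd := hg.dist_le_mul x hx y hy
  rw [Real.dist_eq] at *
  have e1 : f x * g x - f y * g y = f x * (g x - g y) + g y * (f x - f y) := by ring
  rw [Real.coe_toNNReal _ (by positivity), e1]
  calc |f x * (g x - g y) + g y * (f x - f y)|
      ≤ |f x * (g x - g y)| + |g y * (f x - f y)| := abs_add_le _ _
  _ = |f x| * |g x - g y| + |g y| * |f x - f y| := by rw [abs_mul, abs_mul]
  _ ≤ Mf * (Kg * |x - y|) + Mg * (Kf * |x - y|) := by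
      apply add_le_add
      · exact mul_le_mul (hMf x hx) hgd (abs_nonneg _) hMf0
      · exact mul_le_mul (hMg y hy) hfd (abs_nonneg _) hMg0
  _ = (Mf * Kg + Mg * Kf) * |x - y| := by ring


/-- Van Kampen's Theorem: if `q : (0,a] → [0,∞)` is measurable with
`∫_0^a q(s)/s ds < +∞`, then `g(t,x) = (1 + q(t))·x/t` is a uniqueness bound. -/
theorem isUniquenessBound_vanKampen (a b : ℝ) (ha : 0 < a) (hb : 0 < b)
    (q : ℝ → ℝ)
    (hq0 : ∀ t ∈ Set.Ioc (0:ℝ) a, 0 ≤ q t)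
    (hqm : AEMeasurable q (volume.restrict (Set.Ioc 0 a)))
    (hqint : IntegrableOn (fun s => q s / s) (Set.Ioc 0 a)) :
    IsUniquenessBound a b (fun t x => (1 + q t) * x / t) := by
  intro a' ha' φ hLip hmem h0 hd0 hae
  obtain ⟨K, hK⟩ := hLip
  obtain ⟨f, hfK, hfeq⟩ := hK.extend_real
  have ha'0 : 0 < a' := ha'.1
  have ha'a : a' ≤ a := ha'.2
  set Q : ℝ := ∫ s in Set.Ioc (0:ℝ) a, q s / s with hQ
  have key : ∀ t ∈ Set.Ioc (0:ℝ) a', ∀ ε ∈ Set.Ioc (0:ℝ) t,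
      φ t ≤ a' * Real.exp Q * (φ ε / ε) := by
    intro t ht ε hε
    have hε0 : 0 < ε := hε.1
    have hεt : ε ≤ t := hε.2
    have ht0 : 0 < t := ht.1
    have hta' : t ≤ a' := ht.2
    have hφt0 : 0 ≤ φ t := (hmem t ⟨ht0.le, hta'⟩).1
    have hφε0 : 0 ≤ φ ε := (hmem ε ⟨hε0.le, le_trans hεt hta'⟩).1
    set d : ℝ → ℝ := fun s => (1 + q s) / s with hd
    have hsub : Set.Ioc ε a' ⊆ Set.Ioc (0:ℝ) a := Set.Ioc_subset_Ioc hε0.le ha'a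
    have hd0' : ∀ s ∈ Set.Ioc ε a', 0 ≤ d s := fun s hs =>
      div_nonneg (by linarith [hq0 s (hsub hs)]) (le_trans hε0.le hs.1.le)
    have h1int : IntegrableOn (fun s => 1 / s) (Set.Ioc ε a') := by
      apply ContinuousOn.integrableOn_Icc (a := ε) (b := a') ?_ |>.mono_set Set.Ioc_subset_Icc_self
      exact continuousOn_const.div continuousOn_id
        (fun x hx => ne_of_gt (lt_of_lt_of_le hε0 hx.1))
    have h2int : IntegrableOn (fun s => q s / s) (Set.Ioc ε a') := hqint.mono_set hsub
    have hsumint : IntegrableOn (fun s => 1 / s + q s / s) (Set.Ioc ε a') := h1int.add h2int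
    have hd_int : IntegrableOn d (Set.Ioc ε a') := by
      refine hsumint.congr_fun ?_ measurableSet_Ioc
      intro s hs
      show 1 / s + q s / s = (1 + q s) / s
      rw [add_div]
    set L : ℝ := ∫ s in Set.Ioc ε a', d s with hL
    have hεa' : ε ≤ a' := le_trans hεt hta'
    have hLle : Real.exp L ≤ (a' / ε) * Real.exp Q := by
      have e1 : L = (∫ s in Set.Ioc ε a', 1 / s) + ∫ s in Set.Ioc ε a', q s / s := by
        rw [hL, ← integral_add h1int h2int]
        apply setIntegral_congr_fun measurableSet_Ioc
        intro s hs
        show (1 + q s) / s = 1 / s + q s / s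
        rw [add_div]
      have hlog : (∫ s in Set.Ioc ε a', 1 / s) = Real.log a' - Real.log ε := by
        rw [← intervalIntegral.integral_of_le hεa']
        simp only [one_div]
        rw [integral_inv_of_pos hε0 ha'0, Real.log_div (ne_of_gt ha'0) (ne_of_gt hε0)]
      have hq2 : (∫ s in Set.Ioc ε a', q s / s) ≤ Q := by
        apply setIntegral_mono_set hqint ?_ (HasSubset.Subset.eventuallyLE hsub)
        exact (ae_restrict_iff' measurableSet_Ioc).2
          (ae_of_all _ fun s hs => div_nonneg (hq0 s hs) hs.1.le)
      have hLle' : L ≤ Real.log a' - Real.log ε + Q := by rw [e1, hlog]; linarith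
      calc Real.exp L ≤ Real.exp (Real.log a' - Real.log ε + Q) := Real.exp_le_exp.2 hLle'
      _ = (a' / ε) * Real.exp Q := by
          rw [Real.exp_add, Real.exp_sub, Real.exp_log ha'0, Real.exp_log hε0]
    have hdt_int2 : ∀ dt : ℝ → ℝ, Continuous dt → IntegrableOn dt (Set.Ioc ε a') := fun dt h =>
      h.continuousOn.integrableOn_Icc.mono_set Set.Ioc_subset_Icc_self
    have main : ∀ η : ℝ, 0 < η → φ t ≤ Real.exp (L + η) * (φ ε + b * η) := by
      intro η hη
      set d₀ : ℝ → ℝ := (Set.Ioc ε a').indicator d with hd₀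
      have hd₀int : Integrable d₀ := (integrable_indicator_iff measurableSet_Ioc).2 hd_int
      obtain ⟨g, -, hgL1, hgcont, hgint⟩ := hd₀int.exists_hasCompactSupport_integral_sub_le hη
      set dt : ℝ → ℝ := fun s => max (g s) 0 with hdt
      have hdtc : Continuous dt := hgcont.max continuous_const
      have hdt0 : ∀ s, 0 ≤ dt s := fun s => le_max_right _ _
      have hdtint : IntegrableOn dt (Set.Ioc ε a') := hdt_int2 dt hdtc
      have habs_int : IntegrableOn (fun s => |d s - dt s|) (Set.Ioc ε a') :=
        (hd_int.sub hdtint).abs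
      have happrox : (∫ s in Set.Ioc ε a', |d s - dt s|) ≤ η := by
        have hptw : ∀ s ∈ Set.Ioc ε a', |d s - dt s| ≤ ‖d₀ s - g s‖ := by
          intro s hs
          rw [Real.norm_eq_abs, hd₀, Set.indicator_of_mem hs]
          rcases le_total (g s) 0 with hg0 | hg0
          · have e1 : dt s = 0 := max_eq_right hg0
            rw [e1, sub_zero]
            have h2 : 0 ≤ d s := hd0' s hs
            rw [abs_of_nonneg h2, abs_of_nonneg (by linarith)]
            linarith
          · have e1 : dt s = g s := max_eq_left hg0
            rw [e1]
        calc (∫ s in Set.Ioc ε a', |d s - dt s|)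
            ≤ ∫ s in Set.Ioc ε a', ‖d₀ s - g s‖ := by
              apply setIntegral_mono_on habs_int ((hd₀int.sub hgint).norm.integrableOn)
                measurableSet_Ioc hptw
        _ ≤ ∫ s, ‖d₀ s - g s‖ := by
              apply setIntegral_le_integral (hd₀int.sub hgint).norm
              filter_upwards with s using norm_nonneg _
        _ ≤ η := hgL1
      set C : ℝ → ℝ := fun x => ∫ u in ε..x, dt u with hC
      have hCd : ∀ x, HasDerivAt C (dt x) x := fun x =>
        intervalIntegral.integral_hasDerivAt_right (hdtc.intervalIntegrable _ _)
          (hdtc.stronglyMeasurableAtFilter _ _) hdtc.continuousAt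
      have hC0 : ∀ x, ε ≤ x → 0 ≤ C x := fun x hx =>
        intervalIntegral.integral_nonneg hx (fun u _ => hdt0 u)
      have hCle : ∀ x ∈ Set.Icc ε a', C x ≤ L + η := by
        intro x hx
        have e1 : C x = ∫ u in Set.Ioc ε x, dt u := intervalIntegral.integral_of_le hx.1
        have sub2 : Set.Ioc ε x ⊆ Set.Ioc ε a' := Set.Ioc_subset_Ioc le_rfl hx.2
        have step1 : (∫ u in Set.Ioc ε x, dt u) ≤ ∫ u in Set.Ioc ε a', dt u := by
          apply setIntegral_mono_set hdtint
            (ae_of_all _ fun u => hdt0 u) (HasSubset.Subset.eventuallyLE sub2)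
        have step2 : (∫ u in Set.Ioc ε a', dt u)
            ≤ ∫ u in Set.Ioc ε a', (d u + |d u - dt u|) := by
          refine setIntegral_mono_on hdtint ?_ measurableSet_Ioc ?_
          · exact hd_int.add habs_int
          intro u hu
          have h3 : dt u - d u ≤ |d u - dt u| := by
            rw [abs_sub_comm]; exact le_abs_self _
          linarith
        have step3 : (∫ u in Set.Ioc ε a', (d u + |d u - dt u|))
            = L + ∫ u in Set.Ioc ε a', |d u - dt u| := by
          rw [hL, integral_add hd_int habs_int]
        rw [e1]
        calc (∫ u in Set.Ioc ε x, dt u) ≤ ∫ u in Set.Ioc ε a', dt u := step1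
        _ ≤ ∫ u in Set.Ioc ε a', (d u + |d u - dt u|) := step2
        _ = L + ∫ u in Set.Ioc ε a', |d u - dt u| := step3
        _ ≤ L + η := by linarith
      set ρ : ℝ → ℝ := fun x => Real.exp (-C x) with hρ
      have hρd : ∀ x, HasDerivAt ρ (-dt x * ρ x) x := by
        intro x
        have h := ((hCd x).neg).exp
        rw [mul_comm] at h
        exact h
      have hρpos : ∀ x, 0 < ρ x := fun x => Real.exp_pos _
      have hρle1 : ∀ x, ε ≤ x → ρ x ≤ 1 := fun x hx =>
        Real.exp_le_one_iff.2 (by simpa using hC0 x hx)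
      obtain ⟨M, hM⟩ : ∃ M, ∀ x ∈ Set.Icc ε t, ‖dt x‖ ≤ M :=
        isCompact_Icc.exists_bound_of_continuousOn hdtc.continuousOn
      set M' : ℝ≥0 := ⟨max M 0, le_max_right M 0⟩ with hM'
      have hρlip : LipschitzOnWith M' ρ (Set.Icc ε t) := by
        apply Convex.lipschitzOnWith_of_nnnorm_hasDerivWithin_le (convex_Icc ε t)
          (f' := fun x => -dt x * ρ x) (fun x hx => (hρd x).hasDerivWithinAt)
        intro x hx
        rw [← NNReal.coe_le_coe, coe_nnnorm]
        show ‖-dt x * ρ x‖ ≤ max M 0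
        rw [norm_mul, norm_neg]
        have e2 : ‖ρ x‖ ≤ 1 := by
          rw [Real.norm_eq_abs, abs_of_pos (hρpos x)]; exact hρle1 x hx.1
        calc ‖dt x‖ * ‖ρ x‖ ≤ M * 1 :=
              mul_le_mul (hM x hx) e2 (norm_nonneg _) ((norm_nonneg (dt x)).trans (hM x hx))
        _ = M := mul_one M
        _ ≤ max M 0 := le_max_left M 0
      have hflip : LipschitzOnWith K f (Set.Icc ε t) := hfK.lipschitzOnWith
      have hIccsub : Set.Icc ε t ⊆ Set.Icc (0:ℝ) a' := Set.Icc_subset_Icc hε0.le hta'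
      have hfb : ∀ x ∈ Set.Icc ε t, |f x| ≤ b := by
        intro x hx
        rw [← hfeq (hIccsub hx)]
        have h4 := hmem x (hIccsub hx)
        rw [abs_of_nonneg h4.1]
        exact h4.2
      have hρb : ∀ x ∈ Set.Icc ε t, |ρ x| ≤ 1 := fun x hx => by
        rw [abs_of_pos (hρpos x)]; exact hρle1 x hx.1
      obtain ⟨KV, hKV⟩ := lipschitzOnWith_mul hflip hρlip hfb hρb
      obtain ⟨W, hWlip, hWeq⟩ := hKV.extend_real
      set r : ℝ → ℝ := fun s => b * |d s - dt s| with hr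
      have hrint' : IntegrableOn r (Set.Ioc ε a') := habs_int.const_mul b
      have hsub3 : Set.Ioc ε t ⊆ Set.Ioc ε a' := Set.Ioc_subset_Ioc le_rfl hta'
      have hr_int : IntegrableOn r (Set.Ioc ε t) := hrint'.mono_set hsub3
      have hr0 : ∀ s, 0 ≤ r s := fun s => mul_nonneg hb.le (abs_nonneg _)
      have hrle : (∫ s in Set.Ioc ε t, r s) ≤ b * η := by
        calc (∫ s in Set.Ioc ε t, r s) ≤ ∫ s in Set.Ioc ε a', r s :=
              setIntegral_mono_set hrint' (ae_of_all _ hr0)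
                (HasSubset.Subset.eventuallyLE hsub3)
        _ = b * ∫ s in Set.Ioc ε a', |d s - dt s| := by
              show (∫ s in Set.Ioc ε a', b * |d s - dt s|) = _
              exact integral_const_mul b _
        _ ≤ b * η := mul_le_mul_of_nonneg_left happrox hb.le
      have haeW : ∀ᵐ s ∂(volume.restrict (Set.Ioc ε t)), ∀ y, HasDerivAt W y s → y ≤ r s := by
        have h1 : ∀ᵐ s ∂(volume.restrict (Set.Ioc ε t)),
            s ∈ Set.Ioc (0:ℝ) a' → ∀ y, HasDerivAt φ y s → y ≤ (1 + q s) * φ s / s :=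
          ae_restrict_of_ae hae
        have h2 : ∀ᵐ s ∂(volume.restrict (Set.Ioc ε t)), DifferentiableAt ℝ f s :=
          ae_restrict_of_ae hfK.ae_differentiableAt_real
        have h3 : ∀ᵐ s ∂(volume.restrict (Set.Ioc ε t)), s ∈ Set.Ioc ε t :=
          ae_restrict_mem measurableSet_Ioc
        have h4 : ∀ᵐ s ∂(volume.restrict (Set.Ioc ε t)), s ≠ t := by
          refine ae_restrict_of_ae ?_
          rw [ae_iff]
          have e3 : {s : ℝ | ¬ s ≠ t} = {t} := by ext x; simp
          rw [e3]
          exact Real.volume_singleton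
        filter_upwards [h1, h2, h3, h4] with s hs1 hs2 hs3 hs4 y hy
        have hsoo : s ∈ Set.Ioo ε t := ⟨hs3.1, lt_of_le_of_ne hs3.2 hs4⟩
        have hs0a : s ∈ Set.Ioc (0:ℝ) a' := ⟨lt_trans hε0 hsoo.1, le_trans hsoo.2.le hta'⟩
        have hnhds : Set.Icc ε t ∈ 𝓝 s := Icc_mem_nhds hsoo.1 hsoo.2
        have hnhds2 : Set.Icc (0:ℝ) a' ∈ 𝓝 s :=
          Icc_mem_nhds hs0a.1 (lt_of_lt_of_le hsoo.2 hta')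
        have hfd : HasDerivAt f (deriv f s) s := hs2.hasDerivAt
        have hφd : HasDerivAt φ (deriv f s) s := by
          apply hfd.congr_of_eventuallyEq
          filter_upwards [hnhds2] with x hx using hfeq hx
        have hbound := hs1 hs0a (deriv f s) hφd
        have hVd : HasDerivAt (fun x => f x * ρ x)
            (deriv f s * ρ s + f s * (-dt s * ρ s)) s := hfd.mul (hρd s)
        have hWd : HasDerivAt W (deriv f s * ρ s + f s * (-dt s * ρ s)) s := by
          apply hVd.congr_of_eventuallyEq
          filter_upwards [hnhds] with x hx using (hWeq hx).symm
        have huniq : y = deriv f s * ρ s + f s * (-dt s * ρ s) := hy.unique hWd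
        rw [huniq]
        have hfs : f s = φ s := (hfeq ⟨hs0a.1.le, hs0a.2⟩).symm
        have hφmem := hmem s ⟨hs0a.1.le, hs0a.2⟩
        have hρs1 : ρ s ≤ 1 := hρle1 s hsoo.1.le
        have hρs0 : 0 < ρ s := hρpos s
        have hs0 : 0 < s := hs0a.1
        have e2 : deriv f s * ρ s + f s * (-dt s * ρ s)
            = (deriv f s - dt s * φ s) * ρ s := by rw [hfs]; ring
        rw [e2]
        have hd_eq : (1 + q s) * φ s / s = d s * φ s := by rw [hd]; ring
        rw [hd_eq] at hbound
        have hφρb : φ s * ρ s ≤ b := by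
          calc φ s * ρ s ≤ b * 1 :=
                mul_le_mul hφmem.2 hρs1 hρs0.le hb.le
          _ = b := mul_one b
        calc (deriv f s - dt s * φ s) * ρ s ≤ (d s * φ s - dt s * φ s) * ρ s :=
              mul_le_mul_of_nonneg_right (by linarith) hρs0.le
        _ = (d s - dt s) * (φ s * ρ s) := by ring
        _ ≤ |d s - dt s| * (φ s * ρ s) :=
              mul_le_mul_of_nonneg_right (le_abs_self _) (mul_nonneg hφmem.1 hρs0.le)
        _ ≤ |d s - dt s| * b := mul_le_mul_of_nonneg_left hφρb (abs_nonneg _)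
        _ = r s := by rw [hr]; ring
      have hsum := lipschitz_sub_le_integral hWlip hεt hr_int haeW
      have hWt : W t = φ t * ρ t := by
        rw [← hWeq (Set.right_mem_Icc.2 hεt)]
        show f t * ρ t = φ t * ρ t
        rw [← hfeq ⟨ht0.le, hta'⟩]
      have hWε : W ε = φ ε := by
        rw [← hWeq (Set.left_mem_Icc.2 hεt)]
        show f ε * ρ ε = φ ε
        rw [← hfeq ⟨hε0.le, hεa'⟩]
        have : ρ ε = 1 := by
          rw [hρ]
          show Real.exp (-(∫ u in ε..ε, dt u)) = 1
          rw [intervalIntegral.integral_same, neg_zero, Real.exp_zero]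
        rw [this, mul_one]
      have h5 : φ t * ρ t ≤ φ ε + b * η := by
        rw [hWt, hWε] at hsum
        linarith
      have h6 : Real.exp (-(L + η)) ≤ ρ t := by
        rw [hρ]
        exact Real.exp_le_exp.2 (neg_le_neg (hCle t ⟨hεt, hta'⟩))
      have h7 : φ t * Real.exp (-(L + η)) ≤ φ ε + b * η :=
        le_trans (mul_le_mul_of_nonneg_left h6 hφt0) h5
      have h8 := mul_le_mul_of_nonneg_right h7 (Real.exp_pos (L + η)).le
      have hexp1 : Real.exp (-(L + η)) * Real.exp (L + η) = 1 := by
        rw [← Real.exp_add]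
        rw [show -(L + η) + (L + η) = 0 by ring]
        exact Real.exp_zero
      calc φ t = φ t * Real.exp (-(L + η)) * Real.exp (L + η) := by
            rw [mul_assoc, hexp1, mul_one]
      _ ≤ (φ ε + b * η) * Real.exp (L + η) := h8
      _ = Real.exp (L + η) * (φ ε + b * η) := mul_comm _ _
    have hmain0 : φ t ≤ Real.exp L * φ ε := by
      have cont : Tendsto (fun η : ℝ => Real.exp (L + η) * (φ ε + b * η)) (𝓝[>] (0:ℝ))
          (𝓝 (Real.exp L * φ ε)) := by
        have hc : ContinuousAt (fun η : ℝ => Real.exp (L + η) * (φ ε + b * η)) 0 := by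
          fun_prop
        have h9 : Tendsto (fun η : ℝ => Real.exp (L + η) * (φ ε + b * η)) (𝓝[>] (0:ℝ))
            (𝓝 (Real.exp (L + 0) * (φ ε + b * 0))) := hc.continuousWithinAt
        simpa using h9
      refine ge_of_tendsto cont ?_
      filter_upwards [self_mem_nhdsWithin] with η hη
      exact main η hη
    calc φ t ≤ Real.exp L * φ ε := hmain0
    _ ≤ ((a' / ε) * Real.exp Q) * φ ε := mul_le_mul_of_nonneg_right hLle hφε0
    _ = a' * Real.exp Q * (φ ε / ε) := by
        field_simp
  -- conclusion
  intro t ht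
  rcases eq_or_lt_of_le ht.1 with h | h
  · exact h ▸ h0
  · have hge : 0 ≤ φ t := (hmem t ht).1
    have hle : φ t ≤ 0 := by
      have hslope : Tendsto (fun ε => φ ε / ε) (𝓝[>] (0:ℝ)) (𝓝 0) := by
        have h1 := hasDerivWithinAt_iff_tendsto_slope.1 hd0
        have hset : (Set.Ici (0:ℝ)) \ {0} = Set.Ioi 0 := by
          ext x
          simp only [Set.mem_diff, Set.mem_Ici, Set.mem_singleton_iff, Set.mem_Ioi]
          constructor
          · rintro ⟨h1, h2⟩; exact lt_of_le_of_ne h1 (Ne.symm h2)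
          · intro h1; exact ⟨h1.le, ne_of_gt h1⟩
        rw [hset] at h1
        refine h1.congr' ?_
        filter_upwards [self_mem_nhdsWithin] with ε (hε : ε ∈ Set.Ioi (0:ℝ))
        rw [slope_def_field, h0, sub_zero, sub_zero]
      have htend : Tendsto (fun ε => a' * Real.exp Q * (φ ε / ε)) (𝓝[>] (0:ℝ)) (𝓝 0) := by
        simpa using tendsto_const_nhds.mul hslope
      refine ge_of_tendsto htend ?_
      filter_upwards [Ioc_mem_nhdsGT_of_mem ⟨le_refl (0:ℝ), h⟩] with ε hε
      exact key t ⟨h, ht.2⟩ ε hε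
    linarith
end

section
/- Let a, b > 0 and let g : (0,a] × [0,b] → [0,∞) satisfy g(t,x) ≤ p(t) ψ(t,x) for all (t,x), where p(t) = (1 + q₁(t))/t and ψ(t,x) = (1 + q₂(t) x^γ) x, with q₁ : (0,a] → [0,∞) measurable and ∫_0^a q₁(s)/s ds < +∞, q₂ : [0,a] → [0,∞) continuous with q₂' continuous and integrable on (0,a), and γ > 0. Then g is a uniqueness bound. -/
open MeasureTheory Set
open Filter Topology

/-- FTC-type inequality for Lipschitz functions with a.e. derivative bound. -/
lemma lipschitz_sub_le_integral_s13 {f : ℝ → ℝ} {K : NNReal} (hf : LipschitzWith K f)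
    {s t : ℝ} (hst : s < t) {r : ℝ → ℝ} (hr : IntegrableOn r (Set.Ioc s t))
    (hbd : ∀ᵐ u ∂volume, u ∈ Set.Ioo s t → ∀ y, HasDerivAt f y u → y ≤ r u) :
    f t - f s ≤ ∫ u in Set.Ioc s t, r u := by
  have hc : Continuous f := hf.continuous
  set δ : ℕ → ℝ := fun n => ((n : ℝ) + 1)⁻¹ with hδdef
  have hδpos : ∀ n, 0 < δ n := fun n => by positivity
  have hδ0 : Tendsto δ atTop (𝓝 0) := tendsto_one_div_add_atTop_nhds_zero_nat.congr (by
    intro n; simp [hδdef, one_div])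
  set G : ℕ → ℝ → ℝ := fun n u => (f (u + δ n) - f u) / δ n with hGdef
  -- a.e. differentiability and pointwise convergence of difference quotients
  have hae_diff : ∀ᵐ u ∂(volume : Measure ℝ), DifferentiableAt ℝ f u :=
    hf.ae_differentiableAt
  have hslope : ∀ u, DifferentiableAt ℝ f u →
      Tendsto (fun n => G n u) atTop (𝓝 (deriv f u)) := by
    intro u hu
    have hd := hu.hasDerivAt
    rw [hasDerivAt_iff_tendsto_slope] at hd
    have hseq : Tendsto (fun n => u + δ n) atTop (𝓝[≠] u) := by
      rw [tendsto_nhdsWithin_iff]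
      constructor
      · simpa using tendsto_const_nhds.add hδ0
      · exact Eventually.of_forall fun n => by
          simp only [mem_compl_iff, mem_singleton_iff]
          have := (hδpos n).ne'
          intro h; apply this; linarith
    have := hd.comp hseq
    refine this.congr fun n => ?_
    simp only [Function.comp_apply, slope_def_field, hGdef]
    congr 2
    ring
  -- derivative is bounded by K a.e.
  have hderiv_bd : ∀ u, DifferentiableAt ℝ f u → |deriv f u| ≤ (K : ℝ) := by
    intro u hu
    have hd := hu.hasDerivAt
    rw [hasDerivAt_iff_tendsto_slope] at hd
    refine le_of_tendsto ((continuous_abs.tendsto _).comp hd) ?_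
    filter_upwards [self_mem_nhdsWithin] with v hv
    simp only [Function.comp_apply, slope_def_field, abs_div]
    rw [div_le_iff₀ (abs_pos.2 (sub_ne_zero.2 hv))]
    have := hf.dist_le_mul v u
    simpa [Real.dist_eq, abs_sub_comm] using this
  -- dominated convergence
  have hμfin : volume (Set.Ioc s t) < ⊤ := by
    rw [Real.volume_Ioc]; exact ENNReal.ofReal_lt_top
  have hGmeas : ∀ n, AEStronglyMeasurable (G n) (volume.restrict (Set.Ioc s t)) := by
    intro n
    exact (((hc.comp (continuous_id.add continuous_const)).sub hc).div_const _).aestronglyMeasurable.restrict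
  have hGbd : ∀ n, ∀ᵐ u ∂(volume.restrict (Set.Ioc s t)), ‖G n u‖ ≤ (K : ℝ) := by
    intro n
    refine Eventually.of_forall fun u => ?_
    simp only [hGdef, Real.norm_eq_abs, abs_div, abs_of_pos (hδpos n)]
    rw [div_le_iff₀ (hδpos n)]
    have := hf.dist_le_mul (u + δ n) u
    simpa [Real.dist_eq, abs_of_pos (hδpos n)] using this
  have hlim1 : Tendsto (fun n => ∫ u in Set.Ioc s t, G n u) atTop
      (𝓝 (∫ u in Set.Ioc s t, deriv f u)) := by
    refine tendsto_integral_of_dominated_convergence (fun _ => (K : ℝ)) hGmeas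
      (integrableOn_const hμfin.ne) hGbd ?_
    filter_upwards [ae_restrict_of_ae hae_diff] with u hu
    exact hslope u hu
  -- second computation of the limit
  have hint : ∀ p q : ℝ, IntervalIntegrable f volume p q := fun p q =>
    hc.intervalIntegrable p q
  have hG_eq : ∀ n, ∫ u in Set.Ioc s t, G n u =
      ((∫ x in t..(t + δ n), f x) - ∫ x in s..(s + δ n), f x) / δ n := by
    intro n
    rw [← intervalIntegral.integral_of_le hst.le]
    have hi : IntervalIntegrable (fun u => f (u + δ n)) volume s t :=
      (hc.comp (continuous_add_right (δ n))).intervalIntegrable _ _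
    have h1 : ∫ u in s..t, G n u =
        ((∫ u in s..t, f (u + δ n)) - ∫ u in s..t, f u) / δ n := by
      rw [← intervalIntegral.integral_sub hi (hint s t), ← intervalIntegral.integral_div]
    have h2 : ∫ u in s..t, f (u + δ n) = ∫ u in (s + δ n)..(t + δ n), f u :=
      intervalIntegral.integral_comp_add_right _ _
    have h3 := intervalIntegral.integral_add_adjacent_intervals (hint s (s + δ n)) (hint (s + δ n) (t + δ n))
    have h4 := intervalIntegral.integral_add_adjacent_intervals (hint s t) (hint t (t + δ n))
    rw [h1, h2]
    congr 1
    linarith [h3, h4]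
  have hFT : ∀ c : ℝ, Tendsto (fun n => (∫ x in c..(c + δ n), f x) / δ n) atTop (𝓝 (f c)) := by
    intro c
    have hF : HasDerivAt (fun x => ∫ u in c..x, f u) (f c) c :=
      intervalIntegral.integral_hasDerivAt_right (hint c c)
        (hc.stronglyMeasurableAtFilter _ _) hc.continuousAt
    rw [hasDerivAt_iff_tendsto_slope] at hF
    have hseq : Tendsto (fun n => c + δ n) atTop (𝓝[≠] c) := by
      rw [tendsto_nhdsWithin_iff]
      constructor
      · simpa using tendsto_const_nhds.add hδ0
      · exact Eventually.of_forall fun n => by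
          simp only [mem_compl_iff, mem_singleton_iff]
          have := (hδpos n).ne'
          intro h; apply this; linarith
    have := hF.comp hseq
    refine this.congr fun n => ?_
    simp only [Function.comp_apply, slope_def_field, intervalIntegral.integral_same]
    congr 1 <;> ring
  have hlim2 : Tendsto (fun n => ∫ u in Set.Ioc s t, G n u) atTop (𝓝 (f t - f s)) := by
    have := (hFT t).sub (hFT s)
    refine this.congr fun n => ?_
    rw [hG_eq n, sub_div]
  have hkey : f t - f s = ∫ u in Set.Ioc s t, deriv f u :=
    tendsto_nhds_unique hlim2 hlim1
  rw [hkey]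
  have hne_t : ∀ᵐ u ∂(volume : Measure ℝ), u ≠ t := by
    rw [ae_iff]
    have : {u : ℝ | ¬ u ≠ t} = {t} := by ext u; simp
    rw [this]
    exact measure_singleton t
  have hint_deriv : IntegrableOn (deriv f) (Set.Ioc s t) := by
    refine Integrable.mono' (g := fun _ => (K:ℝ)) (integrableOn_const hμfin.ne)
      ((measurable_deriv f).aestronglyMeasurable.restrict) ?_
    filter_upwards [ae_restrict_of_ae hae_diff] with u hu
    exact hderiv_bd u hu
  refine integral_mono_ae hint_deriv hr ?_
  filter_upwards [ae_restrict_of_ae hbd, ae_restrict_of_ae hae_diff,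
    ae_restrict_of_ae hne_t, ae_restrict_mem measurableSet_Ioc] with u hb hd hne hmem
  exact hb ⟨hmem.1, lt_of_le_of_ne hmem.2 hne⟩ _ hd.hasDerivAt


lemma lipschitzOnWith_sub' {f g : ℝ → ℝ} {s : Set ℝ} {Kf Kg : NNReal}
    (hf : LipschitzOnWith Kf f s) (hg : LipschitzOnWith Kg g s) :
    LipschitzOnWith (Kf + Kg) (fun x => f x - g x) s := by
  rw [lipschitzOnWith_iff_dist_le_mul] at hf hg ⊢
  intro x hx y hy
  calc dist (f x - g x) (f y - g y) ≤ dist (f x) (f y) + dist (g x) (g y) :=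
        dist_sub_sub_le _ _ _ _
    _ ≤ Kf * dist x y + Kg * dist x y := add_le_add (hf x hx y hy) (hg x hx y hy)
    _ = (Kf + Kg : NNReal) * dist x y := by push_cast; ring

lemma log_lipschitzOnWith {m : ℝ} (hm : 0 < m) :
    LipschitzOnWith (m⁻¹).toNNReal Real.log (Set.Ici m) := by
  refine (convex_Ici m).lipschitzOnWith_of_nnnorm_hasDerivWithin_le
    (fun x hx => (Real.hasDerivAt_log (lt_of_lt_of_le hm hx).ne').hasDerivWithinAt) ?_
  intro x hx
  have hx0 : 0 < x := hm.trans_le hx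
  rw [← NNReal.coe_le_coe, coe_nnnorm, Real.coe_toNNReal _ (inv_nonneg.2 hm.le)]
  rw [Real.norm_eq_abs, abs_of_pos (inv_pos.2 hx0)]
  exact inv_anti₀ hm hx

set_option maxHeartbeats 1000000 in
/-- Corollary 1: `g` is a uniqueness bound provided
`g(t,x) ≤ (1 + q₁(t))/t · (1 + q₂(t) x^γ) x`, where `q₁ : (0,a] → [0,∞)` is
measurable with `∫_0^a q₁(s)/s ds < +∞`, `q₂ : [0,a] → [0,∞)` is continuous with
`q₂'` continuous and integrable on `(0,a)`, and `γ > 0`. -/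

theorem isUniquenessBound_of_le_one_add
    (a b γ : ℝ) (ha : 0 < a) (hb : 0 < b) (hγ : 0 < γ)
    (g : ℝ → ℝ → ℝ) (q₁ q₂ q₂' : ℝ → ℝ)
    (hg0 : ∀ t ∈ Set.Ioc (0:ℝ) a, ∀ x ∈ Set.Icc (0:ℝ) b, 0 ≤ g t x)
    (hq₁0 : ∀ t ∈ Set.Ioc (0:ℝ) a, 0 ≤ q₁ t)
    (hq₁m : AEMeasurable q₁ (volume.restrict (Set.Ioc 0 a)))
    (hq₁int : IntegrableOn (fun s => q₁ s / s) (Set.Ioc 0 a))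
    (hq₂c : ContinuousOn q₂ (Set.Icc 0 a))
    (hq₂0 : ∀ t ∈ Set.Icc (0:ℝ) a, 0 ≤ q₂ t)
    (hq₂' : ∀ t ∈ Set.Ioo (0:ℝ) a, HasDerivAt q₂ (q₂' t) t)
    (hq₂'c : ContinuousOn q₂' (Set.Ioo 0 a))
    (hq₂'int : IntegrableOn q₂' (Set.Ioo 0 a))
    (hgle : ∀ t ∈ Set.Ioc (0:ℝ) a, ∀ x ∈ Set.Icc (0:ℝ) b,
      g t x ≤ (1 + q₁ t) / t * ((1 + q₂ t * x ^ γ) * x)) :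
    IsUniquenessBound a b g := by
  intro a' ha' φ hlipE hrange hφ0 hφ'0 hae
  obtain ⟨K, hK⟩ := hlipE
  -- bound for q₂
  obtain ⟨u₀, hu₀mem, hu₀⟩ := isCompact_Icc.exists_isMaxOn (nonempty_Icc.2 ha.le) hq₂c
  set Q := q₂ u₀ with hQdef
  have hQ0 : 0 ≤ Q := hq₂0 u₀ hu₀mem
  have hQb : ∀ u ∈ Set.Icc (0:ℝ) a, q₂ u ≤ Q := fun u hu => hu₀ hu
  set c : ℝ := (K : ℝ) ^ γ with hcdef
  have hc0 : 0 ≤ c := Real.rpow_nonneg K.coe_nonneg γ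
  have haγ0 : (0:ℝ) ≤ a ^ γ := Real.rpow_nonneg ha.le γ
  set r : ℝ → ℝ := fun u => (1 + Q * c * a ^ γ) * (q₁ u / u) + Q * c * u ^ (γ - 1) with hrdef
  have hrint : IntegrableOn r (Set.Ioc 0 a) := by
    apply Integrable.add
    · exact hq₁int.const_mul _
    · have h1 : IntervalIntegrable (fun u : ℝ => u ^ (γ - 1)) volume 0 a :=
        intervalIntegral.intervalIntegrable_rpow' (by linarith)
      rw [intervalIntegrable_iff_integrableOn_Ioc_of_le ha.le] at h1
      exact h1.const_mul _
  have hr0 : ∀ u ∈ Set.Ioc (0:ℝ) a, 0 ≤ r u := by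
    intro u hu
    have h1 : 0 ≤ q₁ u / u := div_nonneg (hq₁0 u hu) hu.1.le
    have h2 : (0:ℝ) ≤ u ^ (γ - 1) := Real.rpow_nonneg hu.1.le _
    have h3 : 0 ≤ Q * c * a ^ γ := mul_nonneg (mul_nonneg hQ0 hc0) haγ0
    have h4 : 0 ≤ Q * c := mul_nonneg hQ0 hc0
    simp only [hrdef]
    nlinarith
  have hr0ae : 0 ≤ᵐ[volume.restrict (Set.Ioc 0 a)] r :=
    (ae_restrict_iff' measurableSet_Ioc).2 (Filter.Eventually.of_forall fun u hu => hr0 u hu)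
  set Rtot := ∫ u in Set.Ioc (0:ℝ) a, r u with hRtotdef
  -- extension of φ
  obtain ⟨ψ, hψlip, hψeq⟩ := hK.extend_real
  have hψcont : Continuous ψ := hψlip.continuous
  intro t₀ ht₀
  rcases eq_or_lt_of_le ht₀.1 with h0 | ht₀pos
  · rw [← h0]; exact hφ0
  by_contra hne
  have hpos : 0 < φ t₀ := lt_of_le_of_ne (hrange t₀ ht₀).1 (Ne.symm hne)
  have hψt₀ : ψ t₀ = φ t₀ := (hψeq ht₀).symm
  -- last zero of ψ before t₀
  set Z : Set ℝ := Set.Icc 0 t₀ ∩ {u | ψ u = 0} with hZdef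
  have h0Z : (0:ℝ) ∈ Z := by
    refine ⟨⟨le_refl _, ht₀pos.le⟩, ?_⟩
    show ψ 0 = 0
    rw [← hψeq ⟨le_refl _, ha'.1.le⟩]; exact hφ0
  have hZc : IsClosed Z := isClosed_Icc.inter (isClosed_eq hψcont continuous_const)
  have hZb : BddAbove Z := BddAbove.mono Set.inter_subset_left bddAbove_Icc
  set s₁ := sSup Z with hs₁def
  have hs₁Z : s₁ ∈ Z := hZc.csSup_mem ⟨0, h0Z⟩ hZb
  have hψs₁ : ψ s₁ = 0 := hs₁Z.2
  have hs₁0 : 0 ≤ s₁ := hs₁Z.1.1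
  have hs₁lt : s₁ < t₀ := by
    refine hs₁Z.1.2.lt_of_ne fun h => ?_
    rw [h, hψt₀] at hψs₁
    exact hpos.ne' hψs₁
  have hψpos : ∀ u ∈ Set.Ioc s₁ t₀, 0 < ψ u := by
    intro u hu
    have huI : u ∈ Set.Icc (0:ℝ) a' := ⟨hs₁0.trans hu.1.le, hu.2.trans ht₀.2⟩
    have h0 : 0 ≤ ψ u := by rw [← hψeq huI]; exact (hrange u huI).1
    rcases h0.lt_or_eq with h | h
    · exact h
    · exfalso
      have huZ : u ∈ Z := ⟨⟨hs₁0.trans hu.1.le, hu.2⟩, h.symm⟩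
      exact absurd (le_csSup hZb huZ) (not_le.2 hu.1)
  set ε := Real.exp (Real.log (φ t₀) - Real.log t₀ - Rtot) with hεdef
  have hε : 0 < ε := Real.exp_pos _
  -- key estimate
  have hkey : ∀ s ∈ Set.Ioo s₁ t₀, ε * s ≤ ψ s := by
    intro s hs
    have hs0 : 0 < s := hs₁0.trans_lt hs.1
    have hsub : Set.Ioc s t₀ ⊆ Set.Ioc 0 a :=
      Set.Ioc_subset_Ioc hs0.le (ht₀.2.trans ha'.2)
    -- the function log (ψ τ) - log τ is Lipschitz on [s, t₀]
    obtain ⟨v, hv, hvmin⟩ :=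
      isCompact_Icc.exists_isMinOn (nonempty_Icc.2 hs.2.le) hψcont.continuousOn
    set m := ψ v with hmdef
    have hm : 0 < m := hψpos v ⟨hs.1.trans_le hv.1, hv.2⟩
    have hmaps : Set.MapsTo ψ (Set.Icc s t₀) (Set.Ici m) := fun x hx => hvmin hx
    have hψlipOn : LipschitzOnWith K ψ (Set.Icc s t₀) := hψlip.lipschitzOnWith
    have hlog1 : LipschitzOnWith ((m⁻¹).toNNReal * K) (Real.log ∘ ψ) (Set.Icc s t₀) :=
      (log_lipschitzOnWith hm).comp hψlipOn hmaps
    have hlog2 : LipschitzOnWith (s⁻¹).toNNReal Real.log (Set.Icc s t₀) :=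
      (log_lipschitzOnWith hs0).mono Set.Icc_subset_Ici_self
    have hhlip : LipschitzOnWith ((m⁻¹).toNNReal * K + (s⁻¹).toNNReal)
        (fun τ => Real.log (ψ τ) - Real.log τ) (Set.Icc s t₀) :=
      lipschitzOnWith_sub' hlog1 hlog2
    obtain ⟨H, hHlip, hHeq⟩ := hhlip.extend_real
    -- a.e. derivative bound for H
    have hbd : ∀ᵐ u ∂volume, u ∈ Set.Ioo s t₀ → ∀ y, HasDerivAt H y u → y ≤ r u := by
      filter_upwards [hae, hψlip.ae_differentiableAt] with u hgd hdiff hu y hy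
      have hu0 : 0 < u := hs0.trans hu.1
      have hua' : u ≤ a' := hu.2.le.trans ht₀.2
      have hua : u ≤ a := hua'.trans ha'.2
      have huIcc : u ∈ Set.Icc (0:ℝ) a' := ⟨hu0.le, hua'⟩
      have hψφ : ψ u = φ u := (hψeq huIcc).symm
      have hxpos : 0 < φ u := by
        rw [← hψφ]; exact hψpos u ⟨hs.1.trans hu.1, hu.2.le⟩
      have hdψ : HasDerivAt ψ (deriv ψ u) u := hdiff.hasDerivAt
      have hφψev : φ =ᶠ[nhds u] ψ :=
        Filter.eventuallyEq_of_mem (Ioo_mem_nhds hu0 (hu.2.trans_le ht₀.2))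
          fun v hv => hψeq (Set.Ioo_subset_Icc_self hv)
      have hdφ : HasDerivAt φ (deriv ψ u) u := hdψ.congr_of_eventuallyEq hφψev
      have hd1 : deriv ψ u ≤ g u (φ u) := hgd ⟨hu0, hua'⟩ _ hdφ
      have hd2 : g u (φ u) ≤ (1 + q₁ u) / u * ((1 + q₂ u * (φ u) ^ γ) * φ u) :=
        hgle u ⟨hu0, hua⟩ (φ u) (hrange u huIcc)
      have hlogψ : HasDerivAt (fun τ => Real.log (ψ τ)) (deriv ψ u / ψ u) u :=
        hdψ.log (by rw [hψφ]; exact hxpos.ne')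
      have hlogu : HasDerivAt Real.log u⁻¹ u := Real.hasDerivAt_log hu0.ne'
      have hdh : HasDerivAt (fun τ => Real.log (ψ τ) - Real.log τ)
          (deriv ψ u / ψ u - u⁻¹) u := hlogψ.sub hlogu
      have hHev : H =ᶠ[nhds u] (fun τ => Real.log (ψ τ) - Real.log τ) :=
        Filter.eventuallyEq_of_mem (Ioo_mem_nhds hu.1 hu.2)
          fun v hv => (hHeq (Set.Ioo_subset_Icc_self hv)).symm
      have hdH : HasDerivAt H (deriv ψ u / ψ u - u⁻¹) u := hdh.congr_of_eventuallyEq hHev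
      have hyeq : y = deriv ψ u / ψ u - u⁻¹ := hy.unique hdH
      -- arithmetic
      have hq₁u : 0 ≤ q₁ u := hq₁0 u ⟨hu0, hua⟩
      have hq₂u : 0 ≤ q₂ u := hq₂0 u ⟨hu0.le, hua⟩
      have hq₂uQ : q₂ u ≤ Q := hQb u ⟨hu0.le, hua⟩
      have hxK : φ u ≤ (K : ℝ) * u := by
        have h1 := hK.dist_le_mul u huIcc 0 ⟨le_refl _, ha'.1.le⟩
        rw [Real.dist_eq, Real.dist_eq, hφ0, sub_zero, sub_zero,
          abs_of_pos hxpos, abs_of_pos hu0] at h1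
        exact h1
      have hxγ : (φ u) ^ γ ≤ c * u ^ γ := by
        rw [hcdef, ← Real.mul_rpow K.coe_nonneg hu0.le]
        exact Real.rpow_le_rpow hxpos.le hxK hγ.le
      have huγa : u ^ γ ≤ a ^ γ := Real.rpow_le_rpow hu0.le hua hγ.le
      have huγ0 : (0:ℝ) ≤ u ^ γ := Real.rpow_nonneg hu0.le _
      have hxγ0 : (0:ℝ) ≤ (φ u) ^ γ := Real.rpow_nonneg hxpos.le _
      have hdiv : deriv ψ u / φ u ≤ (1 + q₁ u) / u * (1 + q₂ u * (φ u) ^ γ) := by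
        rw [div_le_iff₀ hxpos]
        calc deriv ψ u ≤ (1 + q₁ u) / u * ((1 + q₂ u * (φ u) ^ γ) * φ u) :=
              le_trans hd1 hd2
          _ = (1 + q₁ u) / u * (1 + q₂ u * (φ u) ^ γ) * φ u := by ring
      have e1 : q₂ u * (φ u) ^ γ ≤ Q * (c * u ^ γ) := mul_le_mul hq₂uQ hxγ hxγ0 hQ0
      have e2 : (1 + q₁ u) / u * (1 + q₂ u * (φ u) ^ γ) - u⁻¹ ≤ r u := by
        have expand : (1 + q₁ u) / u * (1 + q₂ u * (φ u) ^ γ) - u⁻¹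
            = q₁ u / u + (q₂ u * (φ u) ^ γ) / u + q₁ u / u * (q₂ u * (φ u) ^ γ) := by
          field_simp
          ring
        have hueq : Q * c * u ^ (γ - 1) = (Q * (c * u ^ γ)) / u := by
          rw [Real.rpow_sub hu0, Real.rpow_one]; ring
        have b1 : (q₂ u * (φ u) ^ γ) / u ≤ Q * c * u ^ (γ - 1) := by
          rw [hueq]
          exact (div_le_div_iff_of_pos_right hu0).2 e1
        have b2 : q₁ u / u * (q₂ u * (φ u) ^ γ) ≤ q₁ u / u * (Q * c * a ^ γ) := by
          refine mul_le_mul_of_nonneg_left ?_ (div_nonneg hq₁u hu0.le)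
          calc q₂ u * (φ u) ^ γ ≤ Q * (c * u ^ γ) := e1
            _ = Q * c * u ^ γ := by ring
            _ ≤ Q * c * a ^ γ := mul_le_mul_of_nonneg_left huγa (mul_nonneg hQ0 hc0)
        have hrsplit : r u = q₁ u / u + q₁ u / u * (Q * c * a ^ γ) + Q * c * u ^ (γ - 1) := by
          simp only [hrdef]; ring
        rw [expand, hrsplit]
        linarith
      rw [hyeq, hψφ]
      linarith [hdiv, e2]
    -- apply the FTC inequality
    have hmain := lipschitz_sub_le_integral_s13 hHlip hs.2
      (hrint.mono_set hsub) hbd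
    have hHt : Real.log (ψ t₀) - Real.log t₀ = H t₀ := hHeq (Set.right_mem_Icc.2 hs.2.le)
    have hHs : Real.log (ψ s) - Real.log s = H s := hHeq (Set.left_mem_Icc.2 hs.2.le)
    have hRle : ∫ u in Set.Ioc s t₀, r u ≤ Rtot :=
      setIntegral_mono_set hrint hr0ae (HasSubset.Subset.eventuallyLE hsub)
    have l0 : Real.log (φ t₀) - Real.log t₀ - Rtot ≤ Real.log (ψ s) - Real.log s := by
      rw [← hψt₀]
      linarith [hmain, hRle, hHt, hHs]
    have hψs : 0 < ψ s := hψpos s ⟨hs.1, hs.2.le⟩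
    have l1 : Real.log (ε * s) ≤ Real.log (ψ s) := by
      rw [Real.log_mul hε.ne' hs0.ne', hεdef, Real.log_exp]
      have : Real.log s ≤ Real.log s := le_refl _
      linarith
    calc ε * s = Real.exp (Real.log (ε * s)) := (Real.exp_log (by positivity)).symm
      _ ≤ Real.exp (Real.log (ψ s)) := Real.exp_le_exp.2 l1
      _ = ψ s := Real.exp_log hψs
  -- s₁ must be 0
  have hs₁eq : s₁ = 0 := by
    by_contra hs₁ne
    have hs₁pos : 0 < s₁ := hs₁0.lt_of_ne (Ne.symm hs₁ne)
    have htend : Filter.Tendsto (fun s => ψ s - ε * s) (nhdsWithin s₁ (Set.Ioi s₁))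
        (nhds (ψ s₁ - ε * s₁)) :=
      ((hψcont.tendsto s₁).sub ((continuous_const.mul continuous_id).tendsto s₁)).mono_left
        nhdsWithin_le_nhds
    have hev : ∀ᶠ s in nhdsWithin s₁ (Set.Ioi s₁), 0 ≤ ψ s - ε * s := by
      filter_upwards [Ioo_mem_nhdsGT_of_mem ⟨le_refl s₁, hs₁lt⟩] with s hs
      linarith [hkey s hs]
    have hfin := ge_of_tendsto htend hev
    rw [hψs₁] at hfin
    nlinarith
  -- contradiction with φ'(0) = 0
  rw [hasDerivWithinAt_iff_tendsto_slope, Set.Ici_sdiff_left] at hφ'0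
  have hev : ∀ᶠ s in nhdsWithin (0:ℝ) (Set.Ioi 0), ε ≤ slope φ 0 s := by
    have h01 : Set.Ioo (0:ℝ) t₀ ∈ nhdsWithin (0:ℝ) (Set.Ioi 0) := by
      apply Ioo_mem_nhdsGT_of_mem
      exact ⟨le_refl _, ht₀pos⟩
    filter_upwards [h01] with s hs
    have hk := hkey s (by rw [hs₁eq]; exact hs)
    have hφs : φ s = ψ s := hψeq ⟨hs.1.le, hs.2.le.trans ht₀.2⟩
    rw [slope_def_field, hφ0, sub_zero, sub_zero, hφs, le_div_iff₀ hs.1]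
    linarith
  have hfin := ge_of_tendsto hφ'0 hev
  linarith
end

section
/- Let a, b ∈ (0,∞) and define f : U = [0,a] × [−b,b] → ℝ by f(t,x) = t if |x| > ln(1+t²); f(t,x) = (e^{|x|} − 1)/t if |x| ≤ ln(1+t²) and t > 0; and f(0,0) = 0. Then f is continuous on U, 0 ≤ f(t,x) ≤ t for all (t,x) ∈ U, and the initial value problem x' = f(t,x), t ∈ [0,a], x(0) = 0 has only the zero solution. -/
open MeasureTheory Set Real

lemma my_fzero (f : ℝ → ℝ → ℝ)
    (hf : ∀ t x : ℝ,
      f t x = if Real.log (1 + t ^ 2) < |x| then t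
              else if 0 < t then (Real.exp |x| - 1) / t else 0) (x : ℝ) :
    f 0 x = 0 := by
  rw [hf]; simp

lemma my_fmin (f : ℝ → ℝ → ℝ)
    (hf : ∀ t x : ℝ,
      f t x = if Real.log (1 + t ^ 2) < |x| then t
              else if 0 < t then (Real.exp |x| - 1) / t else 0)
    {t : ℝ} (x : ℝ) (ht : 0 < t) :
    f t x = min t ((Real.exp |x| - 1) / t) := by
  have h1 : (0:ℝ) < 1 + t ^ 2 := by positivity
  rw [hf]
  rcases lt_or_ge (Real.log (1 + t ^ 2)) |x| with h | h
  · rw [if_pos h, eq_comm, min_eq_left]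
    have h2 : 1 + t ^ 2 < Real.exp |x| := by
      calc 1 + t ^ 2 = Real.exp (Real.log (1 + t ^ 2)) := (Real.exp_log h1).symm
        _ < Real.exp |x| := Real.exp_lt_exp.2 h
    rw [le_div_iff₀ ht]
    nlinarith
  · rw [if_neg (not_lt.2 h), if_pos ht, eq_comm, min_eq_right]
    have h2 : Real.exp |x| ≤ 1 + t ^ 2 := by
      calc Real.exp |x| ≤ Real.exp (Real.log (1 + t ^ 2)) := Real.exp_le_exp.2 h
        _ = 1 + t ^ 2 := Real.exp_log h1
    rw [div_le_iff₀ ht]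
    nlinarith

lemma my_fbounds (f : ℝ → ℝ → ℝ)
    (hf : ∀ t x : ℝ,
      f t x = if Real.log (1 + t ^ 2) < |x| then t
              else if 0 < t then (Real.exp |x| - 1) / t else 0)
    {t : ℝ} (x : ℝ) (ht : 0 ≤ t) : 0 ≤ f t x ∧ f t x ≤ t := by
  rcases ht.eq_or_lt with h | h
  · rw [← h, my_fzero f hf]
    exact ⟨le_refl 0, le_refl 0⟩
  · rw [my_fmin f hf x h]
    refine ⟨le_min h.le (div_nonneg ?_ h.le), min_le_left _ _⟩
    have := Real.one_le_exp (abs_nonneg x)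
    linarith

lemma my_exp_fact (y : ℝ) : Real.exp y - 1 ≤ y * Real.exp y := by
  have h1 : (-y) + 1 ≤ Real.exp (-y) := Real.add_one_le_exp _
  have h2 : Real.exp (-y) * Real.exp y = 1 := by
    rw [← Real.exp_add]; simp
  nlinarith [Real.exp_pos y, mul_le_mul_of_nonneg_right h1 (Real.exp_pos y).le]

set_option maxHeartbeats 1000000 in
/-- The example: `f(t,x) = t` if `|x| > ln(1+t²)`, `f(t,x) = (e^{|x|}-1)/t` if
`|x| ≤ ln(1+t²)` and `t > 0`, and `f(0,0) = 0`.  Then `f` is continuous on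
`U = [0,a] × [-b,b]`, `0 ≤ f(t,x) ≤ t` on `U`, and the initial value problem
`x' = f(t,x)`, `x(0) = 0` has only the zero solution on `[0,a]`. -/
theorem example_uniqueness
    (a b : ℝ) (ha : 0 < a) (hb : 0 < b)
    (f : ℝ → ℝ → ℝ)
    (hf : ∀ t x : ℝ,
      f t x = if Real.log (1 + t ^ 2) < |x| then t
              else if 0 < t then (Real.exp |x| - 1) / t else 0) :
    ContinuousOn (fun p : ℝ × ℝ => f p.1 p.2) (Set.Icc 0 a ×ˢ Set.Icc (-b) b) ∧
    (∀ t ∈ Set.Icc (0:ℝ) a, ∀ x ∈ Set.Icc (-b) b, 0 ≤ f t x ∧ f t x ≤ t) ∧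
    (∀ x : ℝ → ℝ,
      (∀ t ∈ Set.Icc (0:ℝ) a, x t ∈ Set.Icc (-b) b) →
      x 0 = 0 →
      (∀ t ∈ Set.Icc (0:ℝ) a, HasDerivWithinAt x (f t (x t)) (Set.Icc 0 a) t) →
      ∀ t ∈ Set.Icc (0:ℝ) a, x t = 0) := by
  refine ⟨?_, fun t ht x _ => my_fbounds f hf x ht.1, ?_⟩
  · -- continuity
    intro p hp
    rcases (hp.1.1 : (0:ℝ) ≤ p.1).eq_or_lt with h0 | h0
    · -- p.1 = 0
      have hFp : (fun q : ℝ × ℝ => f q.1 q.2) p = 0 := by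
        show f p.1 p.2 = 0
        rw [← h0, my_fzero f hf]
      have h1 : Filter.Tendsto (fun q : ℝ × ℝ => q.1)
          (nhdsWithin p (Set.Icc 0 a ×ˢ Set.Icc (-b) b)) (nhds p.1) :=
        (continuous_fst.continuousWithinAt : ContinuousWithinAt _ _ p)
      rw [← h0] at h1
      have h : Filter.Tendsto (fun q : ℝ × ℝ => f q.1 q.2)
          (nhdsWithin p (Set.Icc 0 a ×ˢ Set.Icc (-b) b)) (nhds 0) := by
        apply squeeze_zero' ?_ ?_ h1
        · filter_upwards [self_mem_nhdsWithin] with q hq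
          exact (my_fbounds f hf q.2 hq.1.1).1
        · filter_upwards [self_mem_nhdsWithin] with q hq
          exact (my_fbounds f hf q.2 hq.1.1).2
      show Filter.Tendsto (fun q : ℝ × ℝ => f q.1 q.2)
          (nhdsWithin p (Set.Icc 0 a ×ˢ Set.Icc (-b) b)) (nhds (f p.1 p.2))
      have hFp' : f p.1 p.2 = 0 := hFp
      rw [hFp']
      exact h
    · -- 0 < p.1
      have hopen : {q : ℝ × ℝ | 0 < q.1} ∈ nhds p :=
        (isOpen_lt continuous_const continuous_fst).mem_nhds h0
      have heq : (fun q : ℝ × ℝ => min q.1 ((Real.exp |q.2| - 1) / q.1)) =ᶠ[nhds p]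
          (fun q : ℝ × ℝ => f q.1 q.2) :=
        Filter.eventuallyEq_of_mem hopen (fun q hq => (my_fmin f hf q.2 hq).symm)
      have hc : ContinuousAt (fun q : ℝ × ℝ => min q.1 ((Real.exp |q.2| - 1) / q.1)) p := by
        have hc1 : ContinuousAt (fun q : ℝ × ℝ => (Real.exp |q.2| - 1) / q.1) p := by
          apply ContinuousAt.div
          · exact ((Real.continuous_exp.comp (continuous_abs.comp continuous_snd)).continuousAt).sub
              continuousAt_const
          · exact continuousAt_fst
          · exact ne_of_gt h0
        exact continuousAt_fst.min hc1
      exact (hc.congr heq).continuousWithinAt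
  · -- uniqueness
    intro x hmem hx0 hderiv
    have hcont : ContinuousOn x (Set.Icc 0 a) := fun t ht => (hderiv t ht).continuousWithinAt
    have hDA : ∀ t ∈ Set.Ioo (0:ℝ) a, HasDerivAt x (f t (x t)) t := fun t ht =>
      (hderiv t (Set.Ioo_subset_Icc_self ht)).hasDerivAt (Icc_mem_nhds ht.1 ht.2)
    have hmono : MonotoneOn x (Set.Icc 0 a) := by
      apply monotoneOn_of_deriv_nonneg (convex_Icc 0 a) hcont
      · rw [interior_Icc]
        exact fun t ht => (hDA t ht).differentiableAt.differentiableWithinAt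
      · rw [interior_Icc]
        intro t ht
        rw [(hDA t ht).deriv]
        exact (my_fbounds f hf (x t) ht.1.le).1
    have hxnn : ∀ t ∈ Set.Icc (0:ℝ) a, 0 ≤ x t := fun t ht => by
      have := hmono (Set.left_mem_Icc.2 ha.le) ht ht.1
      rwa [hx0] at this
    have hxle : ∀ t ∈ Set.Icc (0:ℝ) a, x t ≤ t ^ 2 / 2 := by
      have hg : MonotoneOn (fun t => t ^ 2 / 2 - x t) (Set.Icc 0 a) := by
        apply monotoneOn_of_deriv_nonneg (convex_Icc 0 a)
        · exact ((continuous_pow 2).continuousOn.div_const 2).sub hcont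
        · rw [interior_Icc]
          intro t ht
          exact (((hasDerivAt_pow 2 t).div_const 2).sub (hDA t ht)).differentiableAt.differentiableWithinAt
        · rw [interior_Icc]
          intro t ht
          rw [HasDerivAt.deriv (f := fun t => t ^ 2 / 2 - x t) (((hasDerivAt_pow 2 t).div_const 2).sub (hDA t ht))]
          have h2 := (my_fbounds f hf (x t) ht.1.le).2
          simp only [Nat.cast_ofNat, pow_one]
          nlinarith
      intro t ht
      have := hg (Set.left_mem_Icc.2 ha.le) ht ht.1
      simp only [hx0] at this
      nlinarith
    set K : ℝ := (a / 2) * Real.exp (a ^ 2 / 2) with hK_def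
    have hK : 0 < K := by positivity
    have main : ∀ t₀ ∈ Set.Icc (0:ℝ) a, 0 < t₀ → ∀ ε : ℝ, 0 < ε → ε ≤ t₀ →
        x t₀ / t₀ ≤ ε / 2 * Real.exp (K * a) := by
      intro t₀ ht₀ ht₀pos ε hε hεt
      have hsub : Set.Icc ε t₀ ⊆ Set.Icc 0 a := Set.Icc_subset_Icc hε.le ht₀.2
      have hucont : ContinuousOn (fun t => x t / t) (Set.Icc ε t₀) :=
        (hcont.mono hsub).div continuousOn_id (fun t ht => ne_of_gt (lt_of_lt_of_le hε ht.1))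
      have huderiv : ∀ s ∈ Set.Ico ε t₀, HasDerivWithinAt (fun t => x t / t)
          ((f s (x s) * s - x s * 1) / s ^ 2) (Set.Ici s) s := by
        intro s hs
        have hs0 : 0 < s := lt_of_lt_of_le hε hs.1
        have hsa : s < a := lt_of_lt_of_le hs.2 ht₀.2
        have hx' : HasDerivWithinAt x (f s (x s)) (Set.Ici s) s := by
          apply (hderiv s ⟨hs0.le, hsa.le⟩).mono_of_mem_nhdsWithin
          rw [mem_nhdsWithin]
          exact ⟨Set.Iio a, isOpen_Iio, hsa, fun y hy => ⟨hs0.le.trans hy.2, hy.1.le⟩⟩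
        exact hx'.div (hasDerivWithinAt_id s (Set.Ici s)) (ne_of_gt hs0)
      have hδ : ‖(fun t => x t / t) ε‖ ≤ ε / 2 := by
        have h1 : 0 ≤ x ε := hxnn ε (hsub ⟨le_refl ε, hεt⟩)
        have h2 : x ε ≤ ε ^ 2 / 2 := hxle ε (hsub ⟨le_refl ε, hεt⟩)
        rw [Real.norm_eq_abs]
        show |x ε / ε| ≤ ε / 2
        rw [abs_of_nonneg (div_nonneg h1 hε.le), div_le_iff₀ hε]
        nlinarith
      have hbound : ∀ s ∈ Set.Ico ε t₀, ‖(f s (x s) * s - x s * 1) / s ^ 2‖ ≤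
          K * ‖(fun t => x t / t) s‖ + 0 := by
        intro s hs
        have hs0 : 0 < s := lt_of_lt_of_le hε hs.1
        have hsa : s ≤ a := hs.2.le.trans ht₀.2
        have hxs0 : 0 ≤ x s := hxnn s ⟨hs0.le, hsa⟩
        have hxs2 : x s ≤ s ^ 2 / 2 := hxle s ⟨hs0.le, hsa⟩
        have hfmin : f s (x s) = min s ((Real.exp (x s) - 1) / s) := by
          rw [my_fmin f hf (x s) hs0, abs_of_nonneg hxs0]
        have hlow : x s / s ≤ f s (x s) := by
          rw [hfmin]
          apply le_min
          · rw [div_le_iff₀ hs0]; nlinarith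
          · have hx1 : x s ≤ Real.exp (x s) - 1 := by
              linarith [Real.add_one_le_exp (x s)]
            gcongr
        have hupp : f s (x s) ≤ (Real.exp (x s) - 1) / s := by
          rw [hfmin]; exact min_le_right _ _
        have hunn : 0 ≤ (f s (x s) * s - x s * 1) / s ^ 2 := by
          apply div_nonneg _ (sq_nonneg s)
          rw [div_le_iff₀ hs0] at hlow
          linarith
        have hun : 0 ≤ x s / s := div_nonneg hxs0 hs0.le
        rw [Real.norm_eq_abs, abs_of_nonneg hunn, add_zero]
        show (f s (x s) * s - x s * 1) / s ^ 2 ≤ K * ‖x s / s‖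
        rw [Real.norm_eq_abs, abs_of_nonneg hun]
        have h1 : f s (x s) * s ≤ Real.exp (x s) - 1 := by
          rw [← le_div_iff₀ hs0]; exact hupp
        have hexp1 := my_exp_fact (x s)
        have hexp2 : Real.exp (x s) - 1 - x s ≤ x s * x s * Real.exp (x s) := by
          nlinarith [mul_le_mul_of_nonneg_left hexp1 hxs0]
        have hexps : Real.exp (x s) ≤ Real.exp (a ^ 2 / 2) :=
          Real.exp_le_exp.2 (by nlinarith)
        rw [div_le_iff₀ (by positivity : (0:ℝ) < s ^ 2)]
        have heq : K * (x s / s) * s ^ 2 = K * x s * s := by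
          field_simp
        rw [heq]
        have c0 : x s * x s * Real.exp (x s) ≤ x s * x s * Real.exp (a ^ 2 / 2) :=
          mul_le_mul_of_nonneg_left hexps (mul_nonneg hxs0 hxs0)
        have c1 : x s * x s ≤ x s * s * (s / 2) := by
          nlinarith [mul_le_mul_of_nonneg_left hxs2 hxs0]
        have c2 : x s * x s * Real.exp (a ^ 2 / 2) ≤ x s * s * (s / 2) * Real.exp (a ^ 2 / 2) :=
          mul_le_mul_of_nonneg_right c1 (Real.exp_pos _).le
        have c3 : x s * s * (s / 2) * Real.exp (a ^ 2 / 2) ≤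
            x s * s * (a / 2) * Real.exp (a ^ 2 / 2) := by
          have hsa2 : s / 2 ≤ a / 2 := by linarith
          exact mul_le_mul_of_nonneg_right
            (mul_le_mul_of_nonneg_left hsa2 (mul_nonneg hxs0 hs0.le)) (Real.exp_pos _).le
        rw [hK_def]
        linarith [h1, hexp2, c0, c2, c3]
      have hg := norm_le_gronwallBound_of_norm_deriv_right_le hucont huderiv hδ hbound t₀
        ⟨hεt, le_refl t₀⟩
      rw [gronwallBound_ε0] at hg
      have hg2 : x t₀ / t₀ ≤ ε / 2 * Real.exp (K * (t₀ - ε)) := by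
        refine le_trans (le_trans (le_abs_self _) ?_) hg
        rw [Real.norm_eq_abs]
      have hKm : Real.exp (K * (t₀ - ε)) ≤ Real.exp (K * a) := by
        apply Real.exp_le_exp.2
        nlinarith [ht₀.2]
      nlinarith [hg2, hKm, hε]

    intro t ht
    have h0 := hxnn t ht
    rcases ht.1.eq_or_lt with h | hpos
    · rw [← h]; exact hx0
    · have hC : 0 < t / 2 * Real.exp (K * a) := by positivity
      have hle : x t ≤ 0 := by
        apply le_of_forall_pos_le_add
        intro δ hδ
        set ε : ℝ := min t (δ / (t / 2 * Real.exp (K * a))) with hε_def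
        have hε : 0 < ε := lt_min hpos (div_pos hδ hC)
        have h1 := main t ht hpos ε hε (min_le_left _ _)
        rw [div_le_iff₀ hpos] at h1
        have h2 : ε ≤ δ / (t / 2 * Real.exp (K * a)) := min_le_right _ _
        have h3 : ε * (t / 2 * Real.exp (K * a)) ≤ δ := by
          rw [← div_mul_cancel₀ δ (ne_of_gt hC)]
          exact mul_le_mul_of_nonneg_right h2 hC.le
        nlinarith
      linarith
end

section
/- Let a, b > 0 and let g : (0,a] × [0,b] → [0,∞) be a given function. Then the following are equivalent: (1) g is a uniqueness bound; (2) whenever φ : [0,ã] ⊂ [0,a] → ℝ is Lipschitz continuous and satisfies φ'(t) ≤ g(t, |φ(t)|) for almost all t ∈ [0,ã], φ(0) ≤ 0 and φ'(0) ≤ 0, then φ(t) ≤ 0 for all t ∈ [0,ã]. -/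
open MeasureTheory Set Filter Topology

lemma ae_ne_real (c : ℝ) : ∀ᵐ t ∂(volume : Measure ℝ), t ≠ c := by
  rw [MeasureTheory.ae_iff]
  convert Real.volume_singleton (a := c) using 2
  ext x; simp

/-- Proposition 2: `g` is a uniqueness bound if and only if every Lipschitz
continuous `φ : [0,a'] → ℝ` (with `|φ| ≤ b`) satisfying
`φ'(t) ≤ g(t,|φ(t)|)` for a.a. `t ∈ [0,a']`, `φ(0) ≤ 0` and `φ'(0) ≤ 0`
(the one-sided derivative at `0` being assumed to exist), is nonpositive
on `[0,a']`. -/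
theorem isUniquenessBound_iff
    (a b : ℝ) (ha : 0 < a) (hb : 0 < b)
    (g : ℝ → ℝ → ℝ)
    (hg0 : ∀ t ∈ Set.Ioc (0:ℝ) a, ∀ x ∈ Set.Icc (0:ℝ) b, 0 ≤ g t x) :
    IsUniquenessBound a b g ↔
      (∀ a' ∈ Set.Ioc (0:ℝ) a, ∀ φ : ℝ → ℝ,
        (∃ K, LipschitzOnWith K φ (Set.Icc 0 a')) →
        (∀ t ∈ Set.Icc (0:ℝ) a', |φ t| ≤ b) →
        φ 0 ≤ 0 →
        (∃ d₀ ≤ (0:ℝ), HasDerivWithinAt φ d₀ (Set.Ici 0) 0) →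
        (∀ᵐ t ∂volume, t ∈ Set.Icc (0:ℝ) a' → ∀ y, HasDerivAt φ y t → y ≤ g t |φ t|) →
        ∀ t ∈ Set.Icc (0:ℝ) a', φ t ≤ 0) := by
  constructor
  · rintro hUB a' ha' φ ⟨K, hK⟩ hφb hφ0 ⟨d₀, hd₀le, hd₀⟩ hae
    set ψ : ℝ → ℝ := fun t => max (φ t) 0 with hψdef
    have hψ0 : ψ 0 = 0 := max_eq_right hφ0
    have hψnn : ∀ t, 0 ≤ ψ t := fun t => le_max_right _ _
    have hlip : LipschitzOnWith K ψ (Icc 0 a') := by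
      apply LipschitzOnWith.of_dist_le_mul
      intro x hx y hy
      calc dist (ψ x) (ψ y) ≤ dist (φ x) (φ y) := by
            simpa [Real.dist_eq] using abs_max_sub_max_le_abs (φ x) (φ y) 0
        _ ≤ K * dist x y := hK.dist_le_mul x hx y hy
    have hderiv0 : HasDerivWithinAt ψ 0 (Ici 0) 0 := by
      rw [hasDerivWithinAt_iff_tendsto_slope, Ici_sdiff_left]
      rw [hasDerivWithinAt_iff_tendsto_slope, Ici_sdiff_left] at hd₀
      have hup : Tendsto (fun t => max (slope φ 0 t) 0) (𝓝[>] (0:ℝ)) (𝓝 0) := by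
        have := hd₀.max (tendsto_const_nhds (x := (0:ℝ)))
        rwa [max_eq_right hd₀le] at this
      refine tendsto_of_tendsto_of_tendsto_of_le_of_le'
        (tendsto_const_nhds (x := (0:ℝ))) hup ?_ ?_
      · filter_upwards [self_mem_nhdsWithin] with t (ht : (0:ℝ) < t)
        rw [slope_def_field, hψ0, sub_zero, sub_zero]
        exact div_nonneg (hψnn t) ht.le
      · filter_upwards [self_mem_nhdsWithin] with t (ht : (0:ℝ) < t)
        rw [slope_def_field, slope_def_field, hψ0, sub_zero, sub_zero]
        have h1 : ψ t / t = max (φ t / t) (0 / t) := by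
          rw [max_div_div_right ht.le]
        rw [h1, zero_div]
        refine max_le_max ?_ le_rfl
        gcongr
        linarith
    have hae' : ∀ᵐ t ∂volume, t ∈ Ioc (0:ℝ) a' → ∀ y, HasDerivAt ψ y t → y ≤ g t (ψ t) := by
      filter_upwards [hae, ae_ne_real a'] with t h1 h2 ht y hy
      have htIoo : t ∈ Ioo (0:ℝ) a' := ⟨ht.1, lt_of_le_of_ne ht.2 h2⟩
      have hmem : Icc (0:ℝ) a' ∈ 𝓝 t := Icc_mem_nhds htIoo.1 htIoo.2
      have hcont : ContinuousAt φ t := hK.continuousOn.continuousAt hmem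
      have hgnn : 0 ≤ g t (ψ t) := by
        refine hg0 t ⟨ht.1, ht.2.trans ha'.2⟩ (ψ t) ⟨hψnn t, ?_⟩
        exact max_le (le_of_abs_le (hφb t ⟨ht.1.le, ht.2⟩)) hb.le
      rcases lt_trichotomy (φ t) 0 with hlt | heq | hgt
      · have hev : ∀ᶠ x in 𝓝 t, φ x < 0 := hcont.eventually (eventually_lt_nhds hlt)
        have hψev : (fun _ : ℝ => (0:ℝ)) =ᶠ[𝓝 t] ψ := by
          filter_upwards [hev] with x hx
          simp [hψdef, max_eq_right hx.le]
        have hy0 : y = 0 :=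
          (hy.congr_of_eventuallyEq hψev.symm.symm).unique (hasDerivAt_const t 0)
        rw [hy0]; exact hgnn
      · have hψt : ψ t = 0 := by simp [hψdef, heq]
        have hmin : IsLocalMin ψ t :=
          Filter.Eventually.of_forall fun x => by rw [hψt]; exact hψnn x
        rw [hmin.hasDerivAt_eq_zero hy]; exact hgnn
      · have hev : ∀ᶠ x in 𝓝 t, 0 < φ x := hcont.eventually (eventually_gt_nhds hgt)
        have hψev : φ =ᶠ[𝓝 t] ψ := by
          filter_upwards [hev] with x hx
          simp [hψdef, max_eq_left hx.le]
        have hφy : HasDerivAt φ y t := hy.congr_of_eventuallyEq hψev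
        have := h1 ⟨ht.1.le, ht.2⟩ y hφy
        rwa [abs_of_pos hgt, show ψ t = φ t from max_eq_left hgt.le] at *
    have hzero := hUB a' ha' ψ ⟨K, hlip⟩
      (fun t ht => ⟨hψnn t, max_le (le_of_abs_le (hφb t ht)) hb.le⟩) hψ0 hderiv0 hae'
    intro t ht
    exact (le_max_left (φ t) 0).trans_eq (hzero t ht)
  · rintro h a' ha' φ ⟨K, hK⟩ hmem hφ0 hd hae
    have hφle : ∀ t ∈ Icc (0:ℝ) a', φ t ≤ 0 := by
      refine h a' ha' φ ⟨K, hK⟩ ?_ hφ0.le ⟨0, le_rfl, hd⟩ ?_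
      · intro t ht; rw [abs_of_nonneg (hmem t ht).1]; exact (hmem t ht).2
      · filter_upwards [hae, ae_ne_real 0] with t h1 h2 ht y hy
        have htIoc : t ∈ Ioc (0:ℝ) a' := ⟨lt_of_le_of_ne ht.1 (Ne.symm h2), ht.2⟩
        have := h1 htIoc y hy
        rwa [abs_of_nonneg (hmem t ht).1]
    intro t ht
    exact le_antisymm (hφle t ht) (hmem t ht).1
end
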